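/- arXiv:1603.00325 — 5 statements merged into one kernel-verified Lean document; each statement's English description precedes it below -/
import Mathlib

section
/- Let TP(u,v) be a non-degenerate transportation polytope and let y and y' be two distinct vertices of TP(u,v) with support trees C and C'. Then y and y' are adjacent in the graph of TP(u,v) if and only if the union C ∪ C' (as edge sets of the complete bipartite graph K_{N1,N2}) contains exactly one cycle. -/
open scoped BigOperators

def TP (N1 N2 : ℕ) (u : Fin N1 → ℝ) (v : Fin N2 → ℝ) :
    Set (Matrix (Fin N1) (Fin N2) ℝ) :=
  {y | (∀ i j, 0 ≤ y i j) ∧ (∀ i, ∑ j, y i j = u i) ∧ (∀ j, ∑ i, y i j = v j)}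

def suppSet {N1 N2 : ℕ} (y : Matrix (Fin N1) (Fin N2) ℝ) : Set (Fin N1 × Fin N2) :=
  {p | 0 < y p.1 p.2}

def Nondeg (N1 N2 : ℕ) (u : Fin N1 → ℝ) (v : Fin N2 → ℝ) : Prop :=
  ∀ y ∈ Set.extremePoints ℝ (TP N1 N2 u v),
    {p : Fin N1 × Fin N2 | y p.1 p.2 ≠ 0}.ncard = N1 + N2 - 1

def IsCycleSet {N1 N2 : ℕ} (D : Set (Fin N1 × Fin N2)) : Prop :=
  ∃ k : ℕ, 2 ≤ k ∧ ∃ (σ : ZMod k → Fin N1) (δ : ZMod k → Fin N2),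
    Function.Injective σ ∧ Function.Injective δ ∧
    D = {p | ∃ t, p = (σ t, δ t)} ∪ {p | ∃ t, p = (σ (t + 1), δ t)}

/-! ### Auxiliary: the signed cycle vector -/

noncomputable def cycVec {N1 N2 : ℕ} (k : ℕ) [NeZero k] (σ : ZMod k → Fin N1)
    (δ : ZMod k → Fin N2) : Matrix (Fin N1) (Fin N2) ℝ :=
  fun i j => ∑ t : ZMod k,
    ((if i = σ t ∧ j = δ t then (1:ℝ) else 0) - (if i = σ (t+1) ∧ j = δ t then (1:ℝ) else 0))

section CycVec
variable {N1 N2 : ℕ} {k : ℕ} [NeZero k] {σ : ZMod k → Fin N1} {δ : ZMod k → Fin N2}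
variable (hk : 2 ≤ k) (hσ : Function.Injective σ) (hδ : Function.Injective δ)

omit [NeZero k] in
lemma one_ne_zero_zmod (hk : 2 ≤ k) : (1 : ZMod k) ≠ 0 := by
  haveI : Fact (1 < k) := ⟨by omega⟩
  exact one_ne_zero

include hk hσ in
lemma sigma_succ_ne (t : ZMod k) : σ (t + 1) ≠ σ t := by
  intro h
  have := hσ h
  have : (1 : ZMod k) = 0 := by
    have h2 : t + 1 - t = t - t := by rw [this]
    simpa using h2
  exact one_ne_zero_zmod hk this

include hk hσ hδ in
lemma cycVec_eval1 (s : ZMod k) : cycVec k σ δ (σ s) (δ s) = 1 := by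
  unfold cycVec
  have h : ∀ t : ZMod k,
      ((if σ s = σ t ∧ δ s = δ t then (1:ℝ) else 0)
        - (if σ s = σ (t+1) ∧ δ s = δ t then (1:ℝ) else 0)) = if t = s then 1 else 0 := by
    intro t
    by_cases h1 : t = s
    · subst h1
      have h2 : σ t ≠ σ (t+1) := fun ha => sigma_succ_ne hk hσ t ha.symm
      simp [h2]
    · have h2 : ¬ (σ s = σ t ∧ δ s = δ t) := fun ⟨ha, _⟩ => h1 (hσ ha).symm
      have h3 : ¬ (σ s = σ (t+1) ∧ δ s = δ t) := fun ⟨_, hb⟩ => h1 (hδ hb).symm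
      simp [h2, h3, h1]
  rw [Finset.sum_congr rfl (fun t _ => h t)]
  simp

include hk hσ hδ in
lemma cycVec_eval2 (s : ZMod k) : cycVec k σ δ (σ (s+1)) (δ s) = -1 := by
  unfold cycVec
  have h : ∀ t : ZMod k,
      ((if σ (s+1) = σ t ∧ δ s = δ t then (1:ℝ) else 0)
        - (if σ (s+1) = σ (t+1) ∧ δ s = δ t then (1:ℝ) else 0)) = if t = s then -1 else 0 := by
    intro t
    by_cases h1 : t = s
    · subst h1
      have h2 : σ (t+1) ≠ σ t := sigma_succ_ne hk hσ t
      simp [h2]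
    · have h2 : ¬ (σ (s+1) = σ t ∧ δ s = δ t) := fun ⟨_, hb⟩ => h1 (hδ hb).symm
      have h3 : ¬ (σ (s+1) = σ (t+1) ∧ δ s = δ t) := fun ⟨_, hb⟩ => h1 (hδ hb).symm
      simp [h2, h3, h1]
  rw [Finset.sum_congr rfl (fun t _ => h t)]
  simp

lemma cycVec_eval0 {i : Fin N1} {j : Fin N2}
    (h : ¬ ∃ t : ZMod k, (i = σ t ∧ j = δ t) ∨ (i = σ (t+1) ∧ j = δ t)) :
    cycVec k σ δ i j = 0 := by
  unfold cycVec
  apply Finset.sum_eq_zero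
  intro t _
  rw [if_neg (fun hc => h ⟨t, Or.inl hc⟩), if_neg (fun hc => h ⟨t, Or.inr hc⟩)]
  ring

lemma cycVec_rowsum (i : Fin N1) : ∑ j, cycVec k σ δ i j = 0 := by
  unfold cycVec
  rw [Finset.sum_comm]
  have h : ∀ t : ZMod k, (∑ j, ((if i = σ t ∧ j = δ t then (1:ℝ) else 0)
      - (if i = σ (t+1) ∧ j = δ t then (1:ℝ) else 0)))
      = (if i = σ t then 1 else 0) - (if i = σ (t+1) then 1 else 0) := by
    intro t
    rw [Finset.sum_sub_distrib]
    congr 1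
    · by_cases hi : i = σ t <;> simp [hi, ite_and]
    · by_cases hi : i = σ (t+1) <;> simp [hi, ite_and]
  rw [Finset.sum_congr rfl (fun t _ => h t), Finset.sum_sub_distrib]
  rw [Fintype.sum_equiv (Equiv.addRight (1 : ZMod k))
    (fun t => if i = σ (t+1) then (1:ℝ) else 0) (fun t => if i = σ t then (1:ℝ) else 0)
    (fun t => rfl)]
  ring

lemma cycVec_colsum (j : Fin N2) : ∑ i, cycVec k σ δ i j = 0 := by
  unfold cycVec
  rw [Finset.sum_comm]
  have h : ∀ t : ZMod k, (∑ i, ((if i = σ t ∧ j = δ t then (1:ℝ) else 0)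
      - (if i = σ (t+1) ∧ j = δ t then (1:ℝ) else 0)))
      = (if j = δ t then 1 else 0) - (if j = δ t then 1 else 0) := by
    intro t
    rw [Finset.sum_sub_distrib]
    congr 1
    · simp [ite_and]
    · simp [ite_and]
  rw [Finset.sum_congr rfl (fun t _ => h t)]
  simp

include hk hσ hδ in
lemma cycVec_supp :
    {p : Fin N1 × Fin N2 | cycVec k σ δ p.1 p.2 ≠ 0}
      = ({p | ∃ t, p = (σ t, δ t)} ∪ {p | ∃ t, p = (σ (t + 1), δ t)}) := by
  ext ⟨i, j⟩
  constructor
  · intro h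
    by_contra hc
    simp only [Set.mem_union, Set.mem_setOf_eq, not_or, not_exists] at hc
    apply h
    apply cycVec_eval0
    rintro ⟨t, (⟨h1, h2⟩ | ⟨h1, h2⟩)⟩
    · exact hc.1 t (Prod.ext h1 h2)
    · exact hc.2 t (Prod.ext h1 h2)
  · rintro (⟨t, hp⟩ | ⟨t, hp⟩) <;> rw [Set.mem_setOf_eq, hp]
    · rw [cycVec_eval1 hk hσ hδ]; norm_num
    · rw [cycVec_eval2 hk hσ hδ]; norm_num

end CycVec

/-! ### Auxiliary: extracting a cycle from the support of a "kernel" matrix -/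

section Extract
variable {N1 N2 : ℕ}

lemma row_step {w : Matrix (Fin N1) (Fin N2) ℝ} (hw : ∀ i, ∑ j, w i j = 0)
    {i : Fin N1} {j : Fin N2} (h : w i j ≠ 0) : ∃ j', j' ≠ j ∧ w i j' ≠ 0 := by
  by_contra hc
  push_neg at hc
  have : ∑ j', w i j' = w i j :=
    Finset.sum_eq_single j (fun b _ hb => hc b hb) (by simp)
  rw [hw i] at this
  exact h this.symm

lemma col_step {w : Matrix (Fin N1) (Fin N2) ℝ} (hw : ∀ j, ∑ i, w i j = 0)
    {i : Fin N1} {j : Fin N2} (h : w i j ≠ 0) : ∃ i', i' ≠ i ∧ w i' j ≠ 0 := by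
  by_contra hc
  push_neg at hc
  have : ∑ i', w i' j = w i j :=
    Finset.sum_eq_single i (fun b _ hb => hc b hb) (by simp)
  rw [hw j] at this
  exact h this.symm

lemma exists_cycle_subset {w : Matrix (Fin N1) (Fin N2) ℝ}
    (hrow : ∀ i, ∑ j, w i j = 0) (hcol : ∀ j, ∑ i, w i j = 0) (hw : w ≠ 0) :
    ∃ D, IsCycleSet D ∧ D ⊆ {p : Fin N1 × Fin N2 | w p.1 p.2 ≠ 0} := by
  classical
  obtain ⟨i0, hi0⟩ : ∃ i, w i ≠ 0 := Function.ne_iff.mp hw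
  obtain ⟨j0, hj0⟩ : ∃ j, w i0 j ≠ 0 := Function.ne_iff.mp hi0
  have step : ∀ p : Fin N1 × Fin N2, w p.1 p.2 ≠ 0 →
      ∃ q : Fin N1 × Fin N2, q.1 ≠ p.1 ∧ q.2 ≠ p.2 ∧ w q.1 p.2 ≠ 0 ∧ w q.1 q.2 ≠ 0 := by
    intro p hp
    obtain ⟨i', hi', hwi'⟩ := col_step hcol hp
    obtain ⟨j', hj', hwj'⟩ := row_step hrow hwi'
    exact ⟨(i', j'), hi', hj', hwi', hwj'⟩
  choose nxt hn1 hn2 hn3 hn4 using step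
  set S := {p : Fin N1 × Fin N2 // w p.1 p.2 ≠ 0} with hS
  let F : S → S := fun p => ⟨nxt p.1 p.2, hn4 p.1 p.2⟩
  let q : ℕ → S := fun n => F^[n] ⟨(i0, j0), hj0⟩
  let I : ℕ → Fin N1 := fun n => (q n).1.1
  let J : ℕ → Fin N2 := fun n => (q n).1.2
  have hq : ∀ n, q (n + 1) = F (q n) := fun n => Function.iterate_succ_apply' F n _
  have hIJ : ∀ n, w (I n) (J n) ≠ 0 := fun n => (q n).2
  have key1 : ∀ n, I (n + 1) ≠ I n := by
    intro n; show (q (n+1)).1.1 ≠ _; rw [hq n]; exact hn1 (q n).1 (q n).2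
  have key2 : ∀ n, J (n + 1) ≠ J n := by
    intro n; show (q (n+1)).1.2 ≠ _; rw [hq n]; exact hn2 (q n).1 (q n).2
  have key3 : ∀ n, w (I (n + 1)) (J n) ≠ 0 := by
    intro n; show w (q (n+1)).1.1 _ ≠ 0; rw [hq n]; exact hn3 (q n).1 (q n).2
  have hrep : ∃ n, 0 < n ∧ ((∃ m < n, I m = I n) ∨ (∃ m < n, J m = J n)) := by
    obtain ⟨a, b, hab, hIab⟩ := Fintype.exists_ne_map_eq_of_card_lt
      (fun n : Fin (N1 + 1) => I n) (by simp)
    rcases lt_or_gt_of_ne (fun h => hab (by exact_mod_cast Fin.ext h)) with h | h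
    · exact ⟨b, by omega, Or.inl ⟨a, h, hIab⟩⟩
    · exact ⟨a, by omega, Or.inl ⟨b, h, hIab.symm⟩⟩
  haveI : DecidablePred fun n => 0 < n ∧ ((∃ m < n, I m = I n) ∨ (∃ m < n, J m = J n)) :=
    fun _ => Classical.dec _
  set nstar := Nat.find hrep with hnstar
  have hP : 0 < nstar ∧ ((∃ m < nstar, I m = I nstar) ∨ (∃ m < nstar, J m = J nstar)) :=
    Nat.find_spec hrep
  have hmin : ∀ n < nstar, ¬(0 < n ∧ ((∃ m < n, I m = I n) ∨ (∃ m < n, J m = J n))) :=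
    fun n hn => Nat.find_min hrep hn
  have Iinj : ∀ a b, a < b → b < nstar → I a ≠ I b := by
    intro a b hab hb h
    exact hmin b hb ⟨by omega, Or.inl ⟨a, hab, h⟩⟩
  have Jinj : ∀ a b, a < b → b < nstar → J a ≠ J b := by
    intro a b hab hb h
    exact hmin b hb ⟨by omega, Or.inr ⟨a, hab, h⟩⟩
  have Iinj' : ∀ a b, a < nstar → b < nstar → I a = I b → a = b := by
    intro a b ha hb h
    rcases lt_trichotomy a b with hc | hc | hc
    · exact absurd h (Iinj a b hc hb)
    · exact hc
    · exact absurd h.symm (Iinj b a hc ha)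
  have Jinj' : ∀ a b, a < nstar → b < nstar → J a = J b → a = b := by
    intro a b ha hb h
    rcases lt_trichotomy a b with hc | hc | hc
    · exact absurd h (Jinj a b hc hb)
    · exact hc
    · exact absurd h.symm (Jinj b a hc ha)
  by_cases hA : ∃ m < nstar, I m = I nstar
  · -- Case A : a repeat among the I's
    obtain ⟨m, hm, hIm⟩ := hA
    set k := nstar - m with hk
    have hk2 : 2 ≤ k := by
      rcases Nat.lt_or_ge k 2 with h2 | h2
      · exfalso
        have hk1 : k = 1 := by omega
        have hms : nstar = m + 1 := by omega
        exact key1 m (by rw [← hms]; exact hIm.symm)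
      · exact h2
    haveI : NeZero k := ⟨by omega⟩
    refine ⟨_, ⟨k, hk2, fun t => I (m + t.val), fun t => J (m + t.val), ?_, ?_, rfl⟩, ?_⟩
    · intro t t' h
      have h1 : m + t.val < nstar := by have := ZMod.val_lt t; omega
      have h2 : m + t'.val < nstar := by have := ZMod.val_lt t'; omega
      have := Iinj' _ _ h1 h2 h
      exact ZMod.val_injective k (by omega)
    · intro t t' h
      have h1 : m + t.val < nstar := by have := ZMod.val_lt t; omega
      have h2 : m + t'.val < nstar := by have := ZMod.val_lt t'; omega
      have := Jinj' _ _ h1 h2 h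
      exact ZMod.val_injective k (by omega)
    · rintro p (⟨t, rfl⟩ | ⟨t, rfl⟩)
      · exact hIJ (m + t.val)
      · haveI : Fact (1 < k) := ⟨by omega⟩
        have hval : (t + 1).val = (t.val + 1) % k := by
          rw [ZMod.val_add, ZMod.val_one]
        have htv := ZMod.val_lt t
        rcases Nat.lt_or_ge (t.val + 1) k with hlt | hge
        · have : (t + 1).val = t.val + 1 := by rw [hval, Nat.mod_eq_of_lt hlt]
          show w (I (m + (t+1).val)) (J (m + t.val)) ≠ 0
          rw [this, show m + (t.val + 1) = (m + t.val) + 1 by ring]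
          exact key3 (m + t.val)
        · have hve : t.val = k - 1 := by omega
          have : (t + 1).val = 0 := by rw [hval]; simp [show t.val + 1 = k by omega]
          show w (I (m + (t+1).val)) (J (m + t.val)) ≠ 0
          rw [this, hve, Nat.add_zero, hIm,
            show m + (k - 1) = (nstar - 1) by omega]
          have := key3 (nstar - 1)
          rwa [show nstar - 1 + 1 = nstar by omega] at this
  · -- Case B : no repeat among I's up to nstar, but J repeats
    obtain ⟨m, hm, hJm⟩ := hP.2.resolve_left hA
    have Iinj'' : ∀ a b, a ≤ nstar → b ≤ nstar → I a = I b → a = b := by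
      intro a b ha hb h
      rcases eq_or_lt_of_le ha with ha' | ha' <;> rcases eq_or_lt_of_le hb with hb' | hb'
      · omega
      · exact absurd ⟨b, hb', h.symm ▸ (by rw [ha'])⟩ hA
      · exact absurd ⟨a, ha', h ▸ (by rw [hb'])⟩ hA
      · exact Iinj' a b ha' hb' h
    set k := nstar - m with hk
    have hk2 : 2 ≤ k := by
      rcases Nat.lt_or_ge k 2 with h2 | h2
      · exfalso
        have hk1 : k = 1 := by omega
        have hms : nstar = m + 1 := by omega
        exact key2 m (by rw [← hms]; exact hJm.symm)
      · exact h2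
    haveI : NeZero k := ⟨by omega⟩
    have hneg1 : ((k - 1 : ℕ) : ZMod k) = -1 := by
      rw [Nat.cast_sub (by omega : 1 ≤ k), ZMod.natCast_self]
      simp
    have hrval : ∀ t : ZMod k, (-(t + 1)).val = ((-t).val + (k - 1)) % k := by
      intro t
      have : -(t + 1) = -t + ((k - 1 : ℕ) : ZMod k) := by rw [hneg1]; ring
      rw [this, ZMod.val_add, ZMod.val_cast_of_lt (by omega : k - 1 < k)]
    refine ⟨_, ⟨k, hk2, fun t => I (m + 1 + (-t).val), fun t => J (m + (-t).val), ?_, ?_, rfl⟩, ?_⟩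
    · intro t t' h
      have h1 : m + 1 + (-t).val ≤ nstar := by have := ZMod.val_lt (-t); omega
      have h2 : m + 1 + (-t').val ≤ nstar := by have := ZMod.val_lt (-t'); omega
      have := Iinj'' _ _ h1 h2 h
      have := ZMod.val_injective k (show (-t).val = (-t').val by omega)
      exact neg_injective this
    · intro t t' h
      have h1 : m + (-t).val < nstar := by have := ZMod.val_lt (-t); omega
      have h2 : m + (-t').val < nstar := by have := ZMod.val_lt (-t'); omega
      have := Jinj' _ _ h1 h2 h
      have := ZMod.val_injective k (show (-t).val = (-t').val by omega)
      exact neg_injective this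
    · rintro p (⟨t, rfl⟩ | ⟨t, rfl⟩)
      · show w (I (m + 1 + (-t).val)) (J (m + (-t).val)) ≠ 0
        rw [show m + 1 + (-t).val = (m + (-t).val) + 1 by ring]
        exact key3 (m + (-t).val)
      · show w (I (m + 1 + (-(t+1)).val)) (J (m + (-t).val)) ≠ 0
        have hrv := hrval t
        have hr := ZMod.val_lt (-t)
        rcases Nat.eq_zero_or_pos (-t).val with hr0 | hr1
        · have : (-(t+1)).val = k - 1 := by
            rw [hrv, hr0, Nat.zero_add, Nat.mod_eq_of_lt (by omega)]
          rw [this, hr0, show m + 0 = m from rfl, hJm, show m + 1 + (k - 1) = nstar by omega]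
          exact hIJ nstar
        · have : (-(t+1)).val = (-t).val - 1 := by
            rw [hrv, show (-t).val + (k - 1) = ((-t).val - 1) + 1 * k by omega,
              Nat.add_mul_mod_self_right, Nat.mod_eq_of_lt (by omega)]
          rw [this, show m + 1 + ((-t).val - 1) = m + (-t).val by omega]
          exact hIJ (m + (-t).val)

end Extract

/-! ### Auxiliary: basic facts about the transportation polytope -/

section Helpers
variable {N1 N2 : ℕ} {u : Fin N1 → ℝ} {v : Fin N2 → ℝ}

lemma TP_convex : Convex ℝ (TP N1 N2 u v) := by
  intro x hx z hz a b ha hb hab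
  refine ⟨fun i j => ?_, fun i => ?_, fun j => ?_⟩
  · have := hx.1 i j; have := hz.1 i j
    simp only [Matrix.add_apply, Matrix.smul_apply, smul_eq_mul]
    positivity
  · simp only [Matrix.add_apply, Matrix.smul_apply, smul_eq_mul]
    rw [Finset.sum_add_distrib, ← Finset.mul_sum, ← Finset.mul_sum, hx.2.1, hz.2.1]
    linear_combination (u i) * hab
  · simp only [Matrix.add_apply, Matrix.smul_apply, smul_eq_mul]
    rw [Finset.sum_add_distrib, ← Finset.mul_sum, ← Finset.mul_sum, hx.2.2, hz.2.2]
    linear_combination (v j) * hab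

lemma TP_mem_add {y w : Matrix (Fin N1) (Fin N2) ℝ} (hy : y ∈ TP N1 N2 u v)
    (hw1 : ∀ i, ∑ j, w i j = 0) (hw2 : ∀ j, ∑ i, w i j = 0)
    (hpos : ∀ i j, 0 ≤ y i j + w i j) : y + w ∈ TP N1 N2 u v := by
  refine ⟨fun i j => by simpa using hpos i j, fun i => ?_, fun j => ?_⟩
  · simp only [Matrix.add_apply]
    rw [Finset.sum_add_distrib, hy.2.1, hw1]
    ring
  · simp only [Matrix.add_apply]
    rw [Finset.sum_add_distrib, hy.2.2, hw2]
    ring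

lemma TP_sub_rowsum {a b : Matrix (Fin N1) (Fin N2) ℝ} (ha : a ∈ TP N1 N2 u v)
    (hb : b ∈ TP N1 N2 u v) : ∀ i, ∑ j, (a - b) i j = 0 := by
  intro i
  simp only [Matrix.sub_apply]
  rw [Finset.sum_sub_distrib, ha.2.1, hb.2.1]
  ring

lemma TP_sub_colsum {a b : Matrix (Fin N1) (Fin N2) ℝ} (ha : a ∈ TP N1 N2 u v)
    (hb : b ∈ TP N1 N2 u v) : ∀ j, ∑ i, (a - b) i j = 0 := by
  intro j
  simp only [Matrix.sub_apply]
  rw [Finset.sum_sub_distrib, ha.2.2, hb.2.2]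
  ring

end Helpers

set_option maxHeartbeats 1000000 in
theorem adjacency_iff_unique_cycle (N1 N2 : ℕ) (hN1 : 0 < N1) (hN2 : 0 < N2)
    (u : Fin N1 → ℝ) (v : Fin N2 → ℝ)
    (hu : ∀ i, 0 < u i) (hv : ∀ j, 0 < v j)
    (huv : ∑ i, u i = ∑ j, v j)
    (hnd : Nondeg N1 N2 u v)
    (y y' : Matrix (Fin N1) (Fin N2) ℝ)
    (hy : y ∈ Set.extremePoints ℝ (TP N1 N2 u v))
    (hy' : y' ∈ Set.extremePoints ℝ (TP N1 N2 u v))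
    (hne : y ≠ y') :
    IsExtreme ℝ (TP N1 N2 u v) (segment ℝ y y') ↔
      ∃! D : Set (Fin N1 × Fin N2), D ⊆ suppSet y ∪ suppSet y' ∧ IsCycleSet D := by
  classical
  have hyS : y ∈ TP N1 N2 u v := hy.1
  have hy'S : y' ∈ TP N1 N2 u v := hy'.1
  set d : Matrix (Fin N1) (Fin N2) ℝ := y' - y with hd
  have hd0 : d ≠ 0 := sub_ne_zero.mpr (Ne.symm hne)
  have hdrow : ∀ i, ∑ j, d i j = 0 := TP_sub_rowsum hy'S hyS
  have hdcol : ∀ j, ∑ i, d i j = 0 := TP_sub_colsum hy'S hyS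
  set H : Set (Fin N1 × Fin N2) := suppSet y ∪ suppSet y' with hH
  have hdsupp : {p : Fin N1 × Fin N2 | d p.1 p.2 ≠ 0} ⊆ H := by
    intro p hp
    simp only [Set.mem_setOf_eq, hd, Matrix.sub_apply] at hp
    by_cases hyp : y p.1 p.2 = 0
    · right
      have : y' p.1 p.2 ≠ 0 := fun h => hp (by rw [h, hyp]; ring)
      exact lt_of_le_of_ne (hy'S.1 p.1 p.2) (Ne.symm this)
    · left
      exact lt_of_le_of_ne (hyS.1 p.1 p.2) (Ne.symm hyp)
  -- matrices supported off H vanish where both y and y' vanish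
  have hyzero : ∀ p : Fin N1 × Fin N2, p ∉ H → y p.1 p.2 = 0 := by
    intro p hp
    simp only [hH, Set.mem_union, suppSet, Set.mem_setOf_eq, not_or, not_lt] at hp
    exact le_antisymm hp.1 (hyS.1 p.1 p.2)
  have hy'zero : ∀ p : Fin N1 × Fin N2, p ∉ H → y' p.1 p.2 = 0 := by
    intro p hp
    simp only [hH, Set.mem_union, suppSet, Set.mem_setOf_eq, not_or, not_lt] at hp
    exact le_antisymm hp.2 (hy'S.1 p.1 p.2)
  constructor
  · -- adjacency → unique cycle
    intro hext
    -- every cycle contained in H coincides with the support of d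
    have claim : ∀ D', D' ⊆ H → IsCycleSet D' → D' = {p : Fin N1 × Fin N2 | d p.1 p.2 ≠ 0} := by
      intro D' hD'H hD'c
      obtain ⟨k, hk2, σ, δ, hσ, hδ, rfl⟩ := hD'c
      haveI : NeZero k := ⟨by omega⟩
      set w' := cycVec k σ δ with hw'
      set m : Matrix (Fin N1) (Fin N2) ℝ := (1/2 : ℝ) • y + (1/2 : ℝ) • y' with hm
      have hmS : m ∈ TP N1 N2 u v :=
        TP_convex hyS hy'S (by norm_num) (by norm_num) (by norm_num)
      have hmseg : m ∈ segment ℝ y y' :=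
        ⟨1/2, 1/2, by norm_num, by norm_num, by norm_num, rfl⟩
      have hmpos : ∀ p ∈ ({p | ∃ t, p = (σ t, δ t)} ∪ {p | ∃ t, p = (σ (t + 1), δ t)} :
          Set (Fin N1 × Fin N2)), 0 < m p.1 p.2 := by
        intro p hp
        have hpH := hD'H hp
        have h1 := hyS.1 p.1 p.2
        have h2 := hy'S.1 p.1 p.2
        simp only [hH, Set.mem_union, suppSet, Set.mem_setOf_eq] at hpH
        simp only [hm, Matrix.add_apply, Matrix.smul_apply, smul_eq_mul]
        rcases hpH with h | h <;> nlinarith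
      haveI : Nonempty (ZMod k) := ⟨0⟩
      set ε : ℝ := Finset.univ.inf' Finset.univ_nonempty
        (fun t => min (m (σ t) (δ t)) (m (σ (t+1)) (δ t))) with hε
      have hεpos : 0 < ε := by
        rw [hε, Finset.lt_inf'_iff]
        intro t _
        exact lt_min (hmpos _ (Or.inl ⟨t, rfl⟩)) (hmpos _ (Or.inr ⟨t, rfl⟩))
      have hεle1 : ∀ t, ε ≤ m (σ t) (δ t) := fun t =>
        le_trans (Finset.inf'_le _ (Finset.mem_univ t)) (min_le_left _ _)
      have hεle2 : ∀ t, ε ≤ m (σ (t+1)) (δ t) := fun t =>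
        le_trans (Finset.inf'_le _ (Finset.mem_univ t)) (min_le_right _ _)
      -- value trichotomy for w'
      have hval : ∀ i j, (∃ t, (i, j) = ((σ t : Fin N1), (δ t : Fin N2)) ∧ w' i j = 1)
          ∨ (∃ t, (i, j) = (σ (t+1), δ t) ∧ w' i j = -1) ∨ w' i j = 0 := by
        intro i j
        by_cases hE : ∃ t : ZMod k, (i = σ t ∧ j = δ t) ∨ (i = σ (t+1) ∧ j = δ t)
        · obtain ⟨t, ht | ht⟩ := hE
          · exact Or.inl ⟨t, by rw [ht.1, ht.2], by
              rw [ht.1, ht.2]; exact cycVec_eval1 hk2 hσ hδ t⟩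
          · exact Or.inr (Or.inl ⟨t, by rw [ht.1, ht.2], by
              rw [ht.1, ht.2]; exact cycVec_eval2 hk2 hσ hδ t⟩)
        · exact Or.inr (Or.inr (cycVec_eval0 hE))
      have haS : m + ε • w' ∈ TP N1 N2 u v := by
        apply TP_mem_add hmS
        · intro i
          simp only [Matrix.smul_apply, smul_eq_mul, ← Finset.mul_sum]
          rw [cycVec_rowsum]; ring
        · intro j
          simp only [Matrix.smul_apply, smul_eq_mul, ← Finset.mul_sum]
          rw [cycVec_colsum]; ring
        · intro i j
          simp only [Matrix.smul_apply, smul_eq_mul]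
          rcases hval i j with ⟨t, hp, hv1⟩ | ⟨t, hp, hv1⟩ | hv1
          · rw [hv1]
            have := hmpos (i, j) (Or.inl ⟨t, hp⟩)
            nlinarith
          · rw [hv1]
            have h1 : i = σ (t+1) := congrArg Prod.fst hp
            have h2 : j = δ t := congrArg Prod.snd hp
            rw [h1, h2]
            have := hεle2 t
            linarith
          · rw [hv1]
            have := hmS.1 i j
            linarith
      have hbS : m + (-ε) • w' ∈ TP N1 N2 u v := by
        apply TP_mem_add hmS
        · intro i
          simp only [Matrix.smul_apply, smul_eq_mul, ← Finset.mul_sum]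
          rw [cycVec_rowsum]; ring
        · intro j
          simp only [Matrix.smul_apply, smul_eq_mul, ← Finset.mul_sum]
          rw [cycVec_colsum]; ring
        · intro i j
          simp only [Matrix.smul_apply, smul_eq_mul]
          rcases hval i j with ⟨t, hp, hv1⟩ | ⟨t, hp, hv1⟩ | hv1
          · rw [hv1]
            have h1 : i = σ t := congrArg Prod.fst hp
            have h2 : j = δ t := congrArg Prod.snd hp
            rw [h1, h2]
            have := hεle1 t
            linarith
          · rw [hv1]
            have := hmpos (i, j) (Or.inr ⟨t, hp⟩)
            nlinarith
          · rw [hv1]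
            have := hmS.1 i j
            linarith
      have hmopen : m ∈ openSegment ℝ (m + ε • w') (m + (-ε) • w') :=
        ⟨1/2, 1/2, by norm_num, by norm_num, by norm_num, by module⟩
      obtain ⟨haseg, hbseg⟩ := And.intro (hext.left_mem_of_mem_openSegment haS hbS hmseg hmopen)
        (hext.right_mem_of_mem_openSegment haS hbS hmseg hmopen)
      rw [segment_eq_image' ℝ y y'] at haseg hbseg
      obtain ⟨ta, _, hta⟩ := haseg
      obtain ⟨tb, _, htb⟩ := hbseg
      -- (m + εw') − (m − εw') = (ta − tb) • d
      have hta' : y + ta • (y' - y) = m + ε • w' := hta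
      have htb' : y + tb • (y' - y) = m + (-ε) • w' := htb
      have hdiff : (2 * ε) • w' = (ta - tb) • d := by
        calc (2 * ε) • w' = (m + ε • w') - (m + (-ε) • w') := by module
          _ = (y + ta • (y' - y)) - (y + tb • (y' - y)) := by rw [hta', htb']
          _ = (ta - tb) • d := by rw [hd]; module
      have hw'supp : {p : Fin N1 × Fin N2 | w' p.1 p.2 ≠ 0}
          = ({p | ∃ t, p = (σ t, δ t)} ∪ {p | ∃ t, p = (σ (t + 1), δ t)}) :=
        cycVec_supp hk2 hσ hδ
      have hw'0 : w' ≠ 0 := by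
        intro h
        have := cycVec_eval1 hk2 hσ hδ 0
        rw [← hw', h] at this
        simp at this
      -- so w' is a nonzero multiple of d
      have hlam : w' = ((ta - tb) / (2 * ε)) • d := by
        have h2ε : (2 * ε) ≠ 0 := by positivity
        have h3 := congrArg (fun z => (2 * ε)⁻¹ • z) hdiff
        simp only [smul_smul] at h3
        rw [inv_mul_cancel₀ h2ε, one_smul] at h3
        rw [h3]
        congr 1
        field_simp
      have hlam0 : (ta - tb) / (2 * ε) ≠ 0 := by
        intro h
        rw [h, zero_smul] at hlam
        exact hw'0 hlam
      rw [← hw'supp]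
      ext p
      simp only [Set.mem_setOf_eq, hlam, Matrix.smul_apply, smul_eq_mul]
      constructor
      · intro h hc
        exact h (by rw [hc]; ring)
      · intro h hc
        rcases mul_eq_zero.mp hc with h1 | h1
        · exact hlam0 h1
        · exact h h1
    obtain ⟨D0, hD0c, hD0s⟩ := exists_cycle_subset hdrow hdcol hd0
    have hD0H : D0 ⊆ H := hD0s.trans hdsupp
    have hD0eq := claim D0 hD0H hD0c
    refine ⟨D0, ⟨hD0H, hD0c⟩, ?_⟩
    intro D'' ⟨hD''H, hD''c⟩
    rw [claim D'' hD''H hD''c, ← hD0eq]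
  · -- unique cycle → adjacency
    rintro ⟨D, ⟨hDH, hDc⟩, hDuniq⟩
    -- the unique cycle D equals the support of d
    obtain ⟨D0, hD0c, hD0s⟩ := exists_cycle_subset hdrow hdcol hd0
    have hD0H : D0 ⊆ H := hD0s.trans hdsupp
    have hD0D : D0 = D := hDuniq D0 ⟨hD0H, hD0c⟩
    obtain ⟨k, hk2, σ, δ, hσ, hδ, hDeq⟩ := hDc
    haveI : NeZero k := ⟨by omega⟩
    set w : Matrix (Fin N1) (Fin N2) ℝ := cycVec k σ δ with hw
    have hwsupp : {p : Fin N1 × Fin N2 | w p.1 p.2 ≠ 0} = D := by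
      rw [hDeq]; exact cycVec_supp hk2 hσ hδ
    have hwH : {p : Fin N1 × Fin N2 | w p.1 p.2 ≠ 0} ⊆ H := hwsupp ▸ hDH
    have he0 : ((σ 0, δ 0) : Fin N1 × Fin N2) ∈ D := by
      rw [hDeq]; exact Or.inl ⟨0, rfl⟩
    have hwe0 : w (σ 0) (δ 0) = 1 := cycVec_eval1 hk2 hσ hδ 0
    -- every kernel element supported in H is a multiple of w
    have hker : ∀ z : Matrix (Fin N1) (Fin N2) ℝ, (∀ i, ∑ j, z i j = 0) →
        (∀ j, ∑ i, z i j = 0) → ({p : Fin N1 × Fin N2 | z p.1 p.2 ≠ 0} ⊆ H) →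
        ∃ c : ℝ, z = c • w := by
      intro z hz1 hz2 hzH
      set c : ℝ := z (σ 0) (δ 0) with hc
      set z2 : Matrix (Fin N1) (Fin N2) ℝ := z - c • w with hz2d
      have hz2row : ∀ i, ∑ j, z2 i j = 0 := by
        intro i
        simp only [hz2d, Matrix.sub_apply, Matrix.smul_apply, smul_eq_mul]
        rw [Finset.sum_sub_distrib, hz1, ← Finset.mul_sum, cycVec_rowsum]
        ring
      have hz2col : ∀ j, ∑ i, z2 i j = 0 := by
        intro j
        simp only [hz2d, Matrix.sub_apply, Matrix.smul_apply, smul_eq_mul]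
        rw [Finset.sum_sub_distrib, hz2, ← Finset.mul_sum, cycVec_colsum]
        ring
      have hz2e0 : z2 (σ 0) (δ 0) = 0 := by
        simp only [hz2d, Matrix.sub_apply, Matrix.smul_apply, smul_eq_mul, hwe0, hc]
        ring
      by_cases hz20 : z2 = 0
      · exact ⟨c, by rw [← sub_eq_zero, ← hz2d]; exact hz20⟩
      · exfalso
        obtain ⟨D2, hD2c, hD2s⟩ := exists_cycle_subset hz2row hz2col hz20
        have hD2H : D2 ⊆ H := by
          refine hD2s.trans ?_
          intro p hp
          simp only [Set.mem_setOf_eq, hz2d, Matrix.sub_apply, Matrix.smul_apply,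
            smul_eq_mul] at hp
          by_cases hzp : z p.1 p.2 = 0
          · have : w p.1 p.2 ≠ 0 := by
              intro h
              exact hp (by rw [hzp, h]; ring)
            exact hwH this
          · exact hzH hzp
        have hD2D : D2 = D := hDuniq D2 ⟨hD2H, hD2c⟩
        have : z2 (σ 0) (δ 0) ≠ 0 := hD2s (hD2D ▸ he0)
        exact this hz2e0
    obtain ⟨c, hdc⟩ := hker d hdrow hdcol hdsupp
    have hc0 : c ≠ 0 := by
      intro h
      rw [h, zero_smul] at hdc
      exact hd0 hdc
    -- membership in the segment via the parameter
    have hsegmem : ∀ β : ℝ, 0 ≤ β → β ≤ 1 → y + β • d ∈ segment ℝ y y' := by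
      intro β h0 h1
      rw [segment_eq_image' ℝ y y']
      exact ⟨β, ⟨h0, h1⟩, rfl⟩
    -- the key extreme-point bound: any TP point on the line y + β d has β ∈ [0,1]
    have hline : ∀ (z : Matrix (Fin N1) (Fin N2) ℝ) (β : ℝ), z ∈ TP N1 N2 u v →
        z = y + β • d → 0 ≤ β ∧ β ≤ 1 := by
      intro z β hzS hzeq
      have hy'd : y' = y + (1:ℝ) • d := by rw [hd]; module
      constructor
      · by_contra hβ
        push_neg at hβ
        have hθ : (0:ℝ) < 1 / (1 - β) := by
          apply div_pos one_pos
          linarith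
        have hθ1 : 1 / (1 - β) < 1 := by
          rw [div_lt_one (by linarith)]
          linarith
        have hyopen : y ∈ openSegment ℝ z y' := by
          refine ⟨1 / (1 - β), 1 - 1 / (1 - β), hθ, by linarith, by ring, ?_⟩
          rw [hzeq, hy'd]
          have hne1 : (1:ℝ) - β ≠ 0 := by intro h; rw [sub_eq_zero] at h; linarith
          have hcoef : (1 / (1 - β)) * β + (1 - 1 / (1 - β)) * 1 = 0 := by
            field_simp
            ring
          have : (1 / (1 - β)) • (y + β • d) + (1 - 1 / (1 - β)) • (y + (1:ℝ) • d)
              = y + ((1 / (1 - β)) * β + (1 - 1 / (1 - β)) * 1) • d := by module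
          rw [this, hcoef, zero_smul, add_zero]
        obtain ⟨hzy, _⟩ := (mem_extremePoints.1 hy).2 _ hzS _ hy'S hyopen
        have : β • d = 0 := by
          calc β • d = (y + β • d) - y := by module
            _ = 0 := by rw [← hzeq, hzy, sub_self]
        rcases smul_eq_zero.mp this with h | h
        · exact absurd h (by linarith)
        · exact hd0 h
      · by_contra hβ
        push_neg at hβ
        have hθ : (0:ℝ) < 1 - 1 / β := by
          have : 1 / β < 1 := by
            rw [div_lt_one (by linarith)]
            linarith
          linarith
        have hθ1 : 1 - 1 / β < 1 := by
          have : 0 < 1 / β := by positivity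
          linarith
        have hy'open : y' ∈ openSegment ℝ y z := by
          refine ⟨1 - 1 / β, 1 / β, hθ, by positivity, by ring, ?_⟩
          rw [hzeq, hy'd]
          have hcoef : (1 / β) * β = 1 := by
            field_simp
          have : (1 - 1 / β) • y + (1 / β) • (y + β • d)
              = y + ((1 / β) * β) • d := by module
          rw [this, hcoef, one_smul]
        obtain ⟨_, hzy'⟩ := (mem_extremePoints.1 hy').2 _ hyS _ hzS hy'open
        have h2 : y + β • d = y + (1:ℝ) • d := by rw [← hzeq, ← hy'd]; exact hzy'
        have : (β - 1) • d = 0 := by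
          calc (β - 1) • d = (y + β • d) - (y + (1:ℝ) • d) := by module
            _ = 0 := by rw [h2, sub_self]
        rcases smul_eq_zero.mp this with h | h
        · have : β = 1 := by linarith [sub_eq_zero.mp h]
          linarith
        · exact hd0 h
    constructor
    · exact (TP_convex).segment_subset hyS hy'S
    · intro x1 hx1 x2 hx2 x hxseg hxopen
      obtain ⟨ta, tb, hta, htb, htab, hxeq⟩ := hxopen
      -- x lies on the line, hence is supported in H
      have hxH : ∀ p : Fin N1 × Fin N2, p ∉ H → x p.1 p.2 = 0 := by
        intro p hp
        rw [segment_eq_image' ℝ y y'] at hxseg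
        obtain ⟨t, _, hxt⟩ := hxseg
        have hwp : w p.1 p.2 = 0 := by
          by_contra h
          exact hp (hwH h)
        have hdp : d p.1 p.2 = 0 := by
          rw [hdc]
          simp [Matrix.smul_apply, hwp]
        rw [← hxt]
        simp only [Matrix.add_apply, Matrix.smul_apply, smul_eq_mul, ← hd]
        rw [hyzero p hp, hdp]
        ring
      -- hence x1, x2 are supported in H
      have hx1H : {p : Fin N1 × Fin N2 | x1 p.1 p.2 ≠ 0} ⊆ H := by
        intro p hp
        by_contra hpH
        have hx0 := hxH p hpH
        have h1 := hx1.1 p.1 p.2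
        have h2 := hx2.1 p.1 p.2
        have : ta * x1 p.1 p.2 + tb * x2 p.1 p.2 = 0 := by
          have := congrArg (fun z : Matrix (Fin N1) (Fin N2) ℝ => z p.1 p.2) hxeq
          simpa [Matrix.add_apply, Matrix.smul_apply, smul_eq_mul, hx0] using this
        have hx1p : x1 p.1 p.2 = 0 := by nlinarith
        exact hp hx1p
      have hx2H : {p : Fin N1 × Fin N2 | x2 p.1 p.2 ≠ 0} ⊆ H := by
        intro p hp
        by_contra hpH
        have hx0 := hxH p hpH
        have h1 := hx1.1 p.1 p.2
        have h2 := hx2.1 p.1 p.2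
        have : ta * x1 p.1 p.2 + tb * x2 p.1 p.2 = 0 := by
          have := congrArg (fun z : Matrix (Fin N1) (Fin N2) ℝ => z p.1 p.2) hxeq
          simpa [Matrix.add_apply, Matrix.smul_apply, smul_eq_mul, hx0] using this
        have hx2p : x2 p.1 p.2 = 0 := by nlinarith
        exact hp hx2p
      -- x1 - y and x2 - y are kernel elements supported in H
      have hmem : ∀ x3 : Matrix (Fin N1) (Fin N2) ℝ, x3 ∈ TP N1 N2 u v →
          ({p : Fin N1 × Fin N2 | x3 p.1 p.2 ≠ 0} ⊆ H) → x3 ∈ segment ℝ y y' := by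
        intro x3 hx3S hx3H
        have hsub : {p : Fin N1 × Fin N2 | (x3 - y) p.1 p.2 ≠ 0} ⊆ H := by
          intro p hp
          simp only [Set.mem_setOf_eq, Matrix.sub_apply] at hp
          by_cases h3 : x3 p.1 p.2 = 0
          · have : y p.1 p.2 ≠ 0 := fun h => hp (by rw [h3, h]; ring)
            exact Or.inl (lt_of_le_of_ne (hyS.1 p.1 p.2) (Ne.symm this))
          · exact hx3H h3
        obtain ⟨α, hα⟩ := hker (x3 - y) (TP_sub_rowsum hx3S hyS) (TP_sub_colsum hx3S hyS) hsub
        have hx3eq : x3 = y + (α / c) • d := by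
          rw [hdc, smul_smul, div_mul_cancel₀ _ hc0, ← hα]
          module
        obtain ⟨h0, h1⟩ := hline x3 (α / c) hx3S hx3eq
        rw [hx3eq]
        exact hsegmem _ h0 h1
      exact hmem x1 hx1 hx1H
end

section
/- A point y of the transportation polytope TP(u,v) is a vertex (extreme point) of TP(u,v) if and only if the support graph of y contains no cycle, i.e., it is a forest. -/
open scoped BigOperators

lemma exists_walk {N1 N2 : ℕ} (S : Set (Fin N1 × Fin N2))
    (hne : S.Nonempty)
    (hrowS : ∀ p ∈ S, ∃ i', i' ≠ p.1 ∧ (i', p.2) ∈ S)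
    (hcolS : ∀ p ∈ S, ∃ j', j' ≠ p.2 ∧ (p.1, j') ∈ S) :
    ∃ (I : ℕ → Fin N1) (J : ℕ → Fin N2),
      (∀ n, (I n, J n) ∈ S) ∧ (∀ n, I (n+1) ≠ I n) ∧ (∀ n, J (n+1) ≠ J n) ∧
      (∀ n, (I (n+1), J n) ∈ S) := by
  classical
  obtain ⟨p0, hp0⟩ := hne
  have key : ∀ q : {p : Fin N1 × Fin N2 // p ∈ S}, ∃ q' : {p : Fin N1 × Fin N2 // p ∈ S},
      q'.1.1 ≠ q.1.1 ∧ q'.1.2 ≠ q.1.2 ∧ (q'.1.1, q.1.2) ∈ S := by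
    rintro ⟨p, hp⟩
    obtain ⟨i', hi1, hi2⟩ := hrowS p hp
    obtain ⟨j', hj1, hj2⟩ := hcolS (i', p.2) hi2
    exact ⟨⟨(i', j'), hj2⟩, hi1, hj1, hi2⟩
  choose F hF using key
  refine ⟨fun n => (F^[n] ⟨p0, hp0⟩).1.1, fun n => (F^[n] ⟨p0, hp0⟩).1.2,
    fun n => (F^[n] ⟨p0, hp0⟩).2, fun n => ?_, fun n => ?_, fun n => ?_⟩ <;>
    simp only [Function.iterate_succ_apply']
  exacts [(hF _).1, (hF _).2.1, (hF _).2.2]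

lemma exists_cycle {N1 N2 : ℕ} (S : Set (Fin N1 × Fin N2))
    (I : ℕ → Fin N1) (J : ℕ → Fin N2)
    (hIJ : ∀ n, (I n, J n) ∈ S) (hI : ∀ n, I (n+1) ≠ I n) (hJ : ∀ n, J (n+1) ≠ J n)
    (hE : ∀ n, (I (n+1), J n) ∈ S) :
    ∃ D, D ⊆ S ∧ IsCycleSet D := by
  classical
  set h : ℕ → Fin N1 ⊕ Fin N2 := fun m =>
    if m % 2 = 0 then Sum.inl (I (m / 2)) else Sum.inr (J (m / 2)) with hh
  have hP : ∃ m, ∃ a, a < m ∧ h a = h m := by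
    obtain ⟨x, z, hxz, heq⟩ := Finite.exists_ne_map_eq_of_infinite h
    rcases lt_or_gt_of_ne hxz with hlt | hlt
    exacts [⟨z, x, hlt, heq⟩, ⟨x, z, hlt, heq.symm⟩]
  set M := Nat.find hP with hM
  obtain ⟨a, haM, hha⟩ := Nat.find_spec hP
  have hinj : ∀ x z, x < z → z < M → h x ≠ h z := by
    intro x z hxz hzM heq
    exact Nat.find_min hP hzM ⟨x, hxz, heq⟩
  have hval : ∀ m, m % 2 = 0 → h m = Sum.inl (I (m / 2)) := fun m hm => if_pos hm
  have hval' : ∀ m, m % 2 = 1 → h m = Sum.inr (J (m / 2)) := fun m hm => if_neg (by omega)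
  rcases Nat.even_or_odd M with hMe | hMo
  · -- M = 2b : row repeat
    obtain ⟨b, hb⟩ := hMe
    have hM2 : M % 2 = 0 := by omega
    have hMd : M / 2 = b := by omega
    have ha2 : a % 2 = 0 := by
      by_contra hodd
      have h1 := hval' a (by omega)
      have h2 := hval M hM2
      rw [h1, h2] at hha
      cases hha
    set a₀ := a / 2 with ha₀
    have hIab : I a₀ = I b := by
      have h1 := hval a ha2
      have h2 := hval M hM2
      rw [h1, h2, hMd] at hha
      exact Sum.inl.inj hha
    have ha₀b : a₀ < b := by omega
    have hIinj : ∀ s t, s < t → t < b → I s ≠ I t := by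
      intro s t hst htb heq
      exact hinj (2*s) (2*t) (by omega) (by omega)
        (by rw [hval (2*s) (by omega), hval (2*t) (by omega)]
            rw [show 2*s/2 = s by omega, show 2*t/2 = t by omega, heq])
    have hJinj : ∀ s t, s < t → t < b → J s ≠ J t := by
      intro s t hst htb heq
      exact hinj (2*s+1) (2*t+1) (by omega) (by omega)
        (by rw [hval' (2*s+1) (by omega), hval' (2*t+1) (by omega)]
            rw [show (2*s+1)/2 = s by omega, show (2*t+1)/2 = t by omega, heq])
    have hk2 : 2 ≤ b - a₀ := by
      rcases Nat.lt_or_ge (a₀ + 1) b with hlt | hge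
      · omega
      · exfalso
        have : b = a₀ + 1 := by omega
        exact hI a₀ (by rw [← this, hIab])
    set k := b - a₀ with hk
    haveI : NeZero k := ⟨by omega⟩
    haveI : Fact (1 < k) := ⟨hk2⟩
    set σ : ZMod k → Fin N1 := fun t => I (a₀ + t.val) with hσ
    set δ : ZMod k → Fin N2 := fun t => J (a₀ + t.val) with hδ
    have hvlt : ∀ t : ZMod k, t.val < k := fun t => ZMod.val_lt t
    have hσinj : Function.Injective σ := by
      intro s t hst
      simp only [hσ] at hst
      by_contra hne'
      have hvne : s.val ≠ t.val := fun hv => hne' (ZMod.val_injective k hv)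
      rcases Nat.lt_or_ge s.val t.val with hlt | hge
      · exact hIinj (a₀ + s.val) (a₀ + t.val) (by omega) (by have := hvlt t; omega) hst
      · exact hIinj (a₀ + t.val) (a₀ + s.val) (by omega) (by have := hvlt s; omega) hst.symm
    have hδinj : Function.Injective δ := by
      intro s t hst
      simp only [hδ] at hst
      by_contra hne'
      have hvne : s.val ≠ t.val := fun hv => hne' (ZMod.val_injective k hv)
      rcases Nat.lt_or_ge s.val t.val with hlt | hge
      · exact hJinj (a₀ + s.val) (a₀ + t.val) (by omega) (by have := hvlt t; omega) hst
      · exact hJinj (a₀ + t.val) (a₀ + s.val) (by omega) (by have := hvlt s; omega) hst.symm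
    have hshift : ∀ t : ZMod k, σ (t + 1) = I (a₀ + t.val + 1) := by
      intro t
      have h1 : (t + 1).val = (t.val + 1) % k := by
        rw [ZMod.val_add, ZMod.val_one]
      by_cases hc : t.val + 1 < k
      · have h2 : (t + 1).val = t.val + 1 := by rw [h1, Nat.mod_eq_of_lt hc]
        simp only [hσ]
        exact congrArg I (by omega)
      · have hkt : t.val + 1 = k := by have := hvlt t; omega
        have h2 : (t + 1).val = 0 := by rw [h1, hkt, Nat.mod_self]
        simp only [hσ, h2]
        rw [show a₀ + 0 = a₀ by omega, hIab]
        exact congrArg I (by omega)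
    refine ⟨_, ?_, k, hk2, σ, δ, hσinj, hδinj, rfl⟩
    rintro p (hp | hp) <;> obtain ⟨t, rfl⟩ := hp
    · exact hIJ (a₀ + t.val)
    · rw [hshift t]
      exact hE (a₀ + t.val)
  · -- M = 2b+1 : column repeat
    obtain ⟨b, hb⟩ := hMo
    have hM2 : M % 2 = 1 := by omega
    have hMd : M / 2 = b := by omega
    have ha2 : a % 2 = 1 := by
      by_contra hodd
      have h1 := hval a (by omega)
      have h2 := hval' M hM2
      rw [h1, h2] at hha
      cases hha
    set a₀ := a / 2 with ha₀
    have hJab : J a₀ = J b := by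
      have h1 := hval' a ha2
      have h2 := hval' M hM2
      rw [h1, h2, hMd] at hha
      exact Sum.inr.inj hha
    have ha₀b : a₀ < b := by omega
    have hIinj : ∀ s t, s < t → t ≤ b → I s ≠ I t := by
      intro s t hst htb heq
      exact hinj (2*s) (2*t) (by omega) (by omega)
        (by rw [hval (2*s) (by omega), hval (2*t) (by omega)]
            rw [show 2*s/2 = s by omega, show 2*t/2 = t by omega, heq])
    have hJinj : ∀ s t, s < t → t < b → J s ≠ J t := by
      intro s t hst htb heq
      exact hinj (2*s+1) (2*t+1) (by omega) (by omega)
        (by rw [hval' (2*s+1) (by omega), hval' (2*t+1) (by omega)]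
            rw [show (2*s+1)/2 = s by omega, show (2*t+1)/2 = t by omega, heq])
    have hk2 : 2 ≤ b - a₀ := by
      rcases Nat.lt_or_ge (a₀ + 1) b with hlt | hge
      · omega
      · exfalso
        have : b = a₀ + 1 := by omega
        exact hJ a₀ (by rw [← this, hJab])
    set k := b - a₀ with hk
    haveI : NeZero k := ⟨by omega⟩
    haveI : Fact (1 < k) := ⟨hk2⟩
    set σ : ZMod k → Fin N1 := fun t => I (a₀ + 1 + t.val) with hσ
    set δ : ZMod k → Fin N2 := fun t => J (a₀ + 1 + t.val) with hδ
    have hvlt : ∀ t : ZMod k, t.val < k := fun t => ZMod.val_lt t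
    have hσinj : Function.Injective σ := by
      intro s t hst
      simp only [hσ] at hst
      by_contra hne'
      have hvne : s.val ≠ t.val := fun hv => hne' (ZMod.val_injective k hv)
      rcases Nat.lt_or_ge s.val t.val with hlt | hge
      · exact hIinj (a₀ + 1 + s.val) (a₀ + 1 + t.val) (by omega) (by have := hvlt t; omega) hst
      · exact hIinj (a₀ + 1 + t.val) (a₀ + 1 + s.val) (by omega) (by have := hvlt s; omega) hst.symm
    -- reindex for δ : index function into [a₀, b)
    have hδval : ∀ t : ZMod k, δ t = J (if t.val = k - 1 then a₀ else a₀ + 1 + t.val) := by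
      intro t
      by_cases hc : t.val = k - 1
      · rw [if_pos hc]
        simp only [hδ]
        rw [hc, show a₀ + 1 + (k - 1) = b by omega]
        exact hJab.symm
      · rw [if_neg hc]
    have hδinj : Function.Injective δ := by
      intro s t hst
      rw [hδval s, hδval t] at hst
      by_contra hne'
      have hvne : s.val ≠ t.val := fun hv => hne' (ZMod.val_injective k hv)
      have hs := hvlt s
      have ht := hvlt t
      set ns := if s.val = k - 1 then a₀ else a₀ + 1 + s.val with hns
      set nt := if t.val = k - 1 then a₀ else a₀ + 1 + t.val with hnt
      have hnsr : a₀ ≤ ns ∧ ns < b ∧ (ns = a₀ ∨ ns = a₀ + 1 + s.val) := by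
        rw [hns]; split <;> omega
      have hntr : a₀ ≤ nt ∧ nt < b ∧ (nt = a₀ ∨ nt = a₀ + 1 + t.val) := by
        rw [hnt]; split <;> omega
      have hnst : ns ≠ nt := by
        rw [hns, hnt]
        split <;> split <;> omega
      rcases Nat.lt_or_ge ns nt with hlt | hge
      · exact hJinj ns nt hlt hntr.2.1 hst
      · exact hJinj nt ns (by omega) hnsr.2.1 hst.symm
    have hshift : ∀ t : ZMod k, σ (t + 1) = if t.val = k - 1 then I (a₀ + 1) else I (a₀ + 1 + t.val + 1) := by
      intro t
      have h1 : (t + 1).val = (t.val + 1) % k := by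
        rw [ZMod.val_add, ZMod.val_one]
      by_cases hc : t.val = k - 1
      · have h2 : (t + 1).val = 0 := by rw [h1, show t.val + 1 = k by have := hvlt t; omega, Nat.mod_self]
        simp only [hσ, h2, if_pos hc]
      · have h2 : (t + 1).val = t.val + 1 := by
          rw [h1, Nat.mod_eq_of_lt (by have := hvlt t; omega)]
        simp only [hσ, h2, if_neg hc]
        exact congrArg I (by omega)
    refine ⟨_, ?_, k, hk2, σ, δ, hσinj, hδinj, rfl⟩
    rintro p (hp | hp) <;> obtain ⟨t, rfl⟩ := hp
    · exact hIJ (a₀ + 1 + t.val)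
    · rw [hshift t, hδval t]
      by_cases hc : t.val = k - 1
      · rw [if_pos hc, if_pos hc]
        exact hE a₀
      · rw [if_neg hc, if_neg hc]
        exact hE (a₀ + 1 + t.val)

lemma not_extreme_aux {N1 N2 : ℕ} {u : Fin N1 → ℝ} {v : Fin N2 → ℝ}
    {y w : Matrix (Fin N1) (Fin N2) ℝ}
    (hy : y ∈ TP N1 N2 u v)
    (hrow : ∀ i, ∑ j, w i j = 0) (hcol : ∀ j, ∑ i, w i j = 0)
    (hbound : ∀ i j, -1 ≤ w i j ∧ w i j ≤ 1)
    (hsupp : ∀ i j, w i j ≠ 0 → 0 < y i j)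
    {i0 : Fin N1} {j0 : Fin N2} (hval : w i0 j0 = 1) :
    y ∉ Set.extremePoints ℝ (TP N1 N2 u v) := by
  obtain ⟨hpos, hrowy, hcoly⟩ := hy
  intro hext
  rw [mem_extremePoints] at hext
  have hne : (Finset.univ : Finset (Fin N1 × Fin N2)).Nonempty := ⟨(i0, j0), Finset.mem_univ _⟩
  set ε : ℝ := Finset.univ.inf' hne (fun p : Fin N1 × Fin N2 =>
    if w p.1 p.2 = 0 then 1 else y p.1 p.2) with hε
  have hεpos : 0 < ε := by
    rw [hε, Finset.lt_inf'_iff]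
    intro p _
    split
    · norm_num
    · exact hsupp p.1 p.2 (by assumption)
  have hεle : ∀ i j, w i j ≠ 0 → ε ≤ y i j := by
    intro i j h
    have := Finset.inf'_le (fun p : Fin N1 × Fin N2 =>
      if w p.1 p.2 = 0 then 1 else y p.1 p.2) (Finset.mem_univ (i, j))
    rwa [if_neg h] at this
  have hmemp : ∀ s : ℝ, -1 ≤ s → s ≤ 1 → (y + (s * ε) • w) ∈ TP N1 N2 u v := by
    intro s hs1 hs2
    refine ⟨fun i j => ?_, fun i => ?_, fun j => ?_⟩
    · simp only [Matrix.add_apply, Matrix.smul_apply, smul_eq_mul]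
      by_cases h : w i j = 0
      · rw [h]; simpa using hpos i j
      · have h1 := hεle i j h
        have h2 := (hbound i j).1
        have h3 := (hbound i j).2
        have h4 : -1 ≤ s * w i j := by nlinarith
        nlinarith [mul_le_mul_of_nonneg_left h4 hεpos.le]
    · simp only [Matrix.add_apply, Matrix.smul_apply, smul_eq_mul]
      rw [Finset.sum_add_distrib, hrowy i, ← Finset.mul_sum, hrow i]
      ring
    · simp only [Matrix.add_apply, Matrix.smul_apply, smul_eq_mul]
      rw [Finset.sum_add_distrib, hcoly j, ← Finset.mul_sum, hcol j]
      ring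
  have h1 := hmemp 1 (by norm_num) le_rfl
  have h2 := hmemp (-1) le_rfl (by norm_num)
  have hseg : y ∈ openSegment ℝ (y + (1 * ε) • w) (y + ((-1) * ε) • w) := by
    refine ⟨1/2, 1/2, by norm_num, by norm_num, by norm_num, ?_⟩
    module
  have heq := (hext.2 _ h1 _ h2 hseg).1
  have h3 := congrFun (congrFun heq i0) j0
  simp only [Matrix.add_apply, Matrix.smul_apply, smul_eq_mul, hval, mul_one, one_mul] at h3
  linarith

lemma not_extreme_of_cycle {N1 N2 : ℕ} {u : Fin N1 → ℝ} {v : Fin N2 → ℝ}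
    {y : Matrix (Fin N1) (Fin N2) ℝ} (hy : y ∈ TP N1 N2 u v)
    (D : Set (Fin N1 × Fin N2)) (hD : D ⊆ suppSet y) (hcyc : IsCycleSet D) :
    y ∉ Set.extremePoints ℝ (TP N1 N2 u v) := by
  obtain ⟨k, hk, σ, δ, hσ, hδ, hDeq⟩ := hcyc
  haveI : NeZero k := ⟨by omega⟩
  haveI : Fact (1 < k) := ⟨hk⟩
  set w : Matrix (Fin N1) (Fin N2) ℝ := fun i j =>
    ∑ t : ZMod k, ((if (i, j) = (σ t, δ t) then (1:ℝ) else 0)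
      - (if (i, j) = (σ (t+1), δ t) then (1:ℝ) else 0)) with hw
  have hrow : ∀ i, ∑ j, w i j = 0 := by
    intro i
    show (∑ j, ∑ t : ZMod k, ((if (i, j) = (σ t, δ t) then (1:ℝ) else 0)
      - (if (i, j) = (σ (t+1), δ t) then (1:ℝ) else 0))) = 0
    rw [Finset.sum_comm]
    have key : ∀ t : ZMod k, (∑ j, ((if (i, j) = (σ t, δ t) then (1:ℝ) else 0)
        - (if (i, j) = (σ (t+1), δ t) then (1:ℝ) else 0)))
        = (if i = σ t then (1:ℝ) else 0) - (if i = σ (t+1) then (1:ℝ) else 0) := by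
      intro t
      rw [Finset.sum_sub_distrib]
      congr 1
      · simp [Prod.ext_iff, ite_and]
      · simp [Prod.ext_iff, ite_and]
    calc ∑ t : ZMod k, (∑ j, ((if (i, j) = (σ t, δ t) then (1:ℝ) else 0)
        - (if (i, j) = (σ (t+1), δ t) then (1:ℝ) else 0)))
        = ∑ t : ZMod k, ((if i = σ t then (1:ℝ) else 0) - (if i = σ (t+1) then (1:ℝ) else 0)) :=
          Finset.sum_congr rfl (fun t _ => key t)
      _ = (∑ t : ZMod k, (if i = σ t then (1:ℝ) else 0))
          - ∑ t : ZMod k, (if i = σ (t+1) then (1:ℝ) else 0) := Finset.sum_sub_distrib _ _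
      _ = 0 := by
          rw [Fintype.sum_equiv (Equiv.addRight (1 : ZMod k))
            (fun t => if i = σ (t+1) then (1:ℝ) else 0) (fun t => if i = σ t then (1:ℝ) else 0)
            (fun t => rfl)]
          ring
  have hcol : ∀ j, ∑ i, w i j = 0 := by
    intro j
    show (∑ i, ∑ t : ZMod k, ((if (i, j) = (σ t, δ t) then (1:ℝ) else 0)
      - (if (i, j) = (σ (t+1), δ t) then (1:ℝ) else 0))) = 0
    rw [Finset.sum_comm]
    refine Finset.sum_eq_zero (fun t _ => ?_)
    rw [Finset.sum_sub_distrib]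
    have h1 : (∑ i, (if (i, j) = (σ t, δ t) then (1:ℝ) else 0)) = if j = δ t then 1 else 0 := by
      simp [Prod.ext_iff, ite_and]
    have h2 : (∑ i, (if (i, j) = (σ (t+1), δ t) then (1:ℝ) else 0)) = if j = δ t then 1 else 0 := by
      simp [Prod.ext_iff, ite_and]
    rw [h1, h2]; ring
  have hsupp : ∀ i j, w i j ≠ 0 → (i, j) ∈ D := by
    intro i j hne
    by_contra hmem
    rw [hDeq] at hmem
    simp only [Set.mem_union, Set.mem_setOf_eq, not_or, not_exists] at hmem
    apply hne
    refine Finset.sum_eq_zero (fun t _ => ?_)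
    rw [if_neg (hmem.1 t), if_neg (hmem.2 t)]
    ring
  have hA : ∀ i j, (∑ t : ZMod k, (if (i, j) = (σ t, δ t) then (1:ℝ) else 0)) = 0 ∨
      (∑ t : ZMod k, (if (i, j) = (σ t, δ t) then (1:ℝ) else 0)) = 1 := by
    intro i j
    by_cases h : ∃ t, (i, j) = (σ t, δ t)
    · right
      obtain ⟨t0, ht0⟩ := h
      rw [Finset.sum_eq_single t0]
      · rw [if_pos ht0]
      · intro b _ hb
        rw [if_neg]
        intro hb'
        have h2 := ht0.symm.trans hb'
        simp only [Prod.mk.injEq] at h2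
        exact hb (hδ h2.2).symm
      · simp
    · left
      refine Finset.sum_eq_zero (fun t _ => if_neg (fun ht => h ⟨t, ht⟩))
  have hB : ∀ i j, (∑ t : ZMod k, (if (i, j) = (σ (t+1), δ t) then (1:ℝ) else 0)) = 0 ∨
      (∑ t : ZMod k, (if (i, j) = (σ (t+1), δ t) then (1:ℝ) else 0)) = 1 := by
    intro i j
    by_cases h : ∃ t, (i, j) = (σ (t+1), δ t)
    · right
      obtain ⟨t0, ht0⟩ := h
      rw [Finset.sum_eq_single t0]
      · rw [if_pos ht0]
      · intro b _ hb
        rw [if_neg]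
        intro hb'
        have h2 := ht0.symm.trans hb'
        simp only [Prod.mk.injEq] at h2
        exact hb (hδ h2.2).symm
      · simp
    · left
      refine Finset.sum_eq_zero (fun t _ => if_neg (fun ht => h ⟨t, ht⟩))
  have hbound : ∀ i j, -1 ≤ w i j ∧ w i j ≤ 1 := by
    intro i j
    have hsub : w i j = (∑ t : ZMod k, (if (i, j) = (σ t, δ t) then (1:ℝ) else 0))
        - (∑ t : ZMod k, (if (i, j) = (σ (t+1), δ t) then (1:ℝ) else 0)) := Finset.sum_sub_distrib _ _
    rcases hA i j with h1 | h1 <;> rcases hB i j with h2 | h2 <;>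
      rw [hsub, h1, h2] <;> norm_num
  have hone : (0 : ZMod k) ≠ 1 := zero_ne_one
  have hval : w (σ 0) (δ 0) = 1 := by
    have hsub : w (σ 0) (δ 0) = (∑ t : ZMod k, (if ((σ 0 : Fin N1), (δ 0 : Fin N2)) = (σ t, δ t) then (1:ℝ) else 0))
        - (∑ t : ZMod k, (if ((σ 0 : Fin N1), (δ 0 : Fin N2)) = (σ (t+1), δ t) then (1:ℝ) else 0)) :=
      Finset.sum_sub_distrib _ _
    rw [hsub]
    have h1 : (∑ t : ZMod k, (if ((σ 0 : Fin N1), (δ 0 : Fin N2)) = (σ t, δ t) then (1:ℝ) else 0)) = 1 := by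
      rw [Finset.sum_eq_single (0 : ZMod k)]
      · simp
      · intro b _ hb
        rw [if_neg]
        intro hb'
        simp only [Prod.mk.injEq] at hb'
        exact hb (hδ hb'.2).symm
      · simp
    have h2 : (∑ t : ZMod k, (if ((σ 0 : Fin N1), (δ 0 : Fin N2)) = (σ (t+1), δ t) then (1:ℝ) else 0)) = 0 := by
      refine Finset.sum_eq_zero (fun t _ => if_neg (fun ht => ?_))
      simp only [Prod.mk.injEq] at ht
      have ht0 : t = 0 := (hδ ht.2).symm
      subst ht0
      exact hone (by simpa using hσ ht.1)
    rw [h1, h2]; ring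
  exact not_extreme_aux hy hrow hcol hbound
    (fun i j h => hD (hsupp i j h)) hval

lemma extreme_of_no_cycle {N1 N2 : ℕ} {u : Fin N1 → ℝ} {v : Fin N2 → ℝ}
    {y : Matrix (Fin N1) (Fin N2) ℝ} (hy : y ∈ TP N1 N2 u v)
    (hnc : ¬ ∃ D : Set (Fin N1 × Fin N2), D ⊆ suppSet y ∧ IsCycleSet D) :
    y ∈ Set.extremePoints ℝ (TP N1 N2 u v) := by
  rw [mem_extremePoints]
  refine ⟨hy, fun y1 h1 y2 h2 hseg => ?_⟩
  obtain ⟨a, b, ha, hb, hab, hsum⟩ := hseg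
  have h12 : y1 = y2 := by
    by_contra hne
    set S := {p : Fin N1 × Fin N2 | y1 p.1 p.2 - y2 p.1 p.2 ≠ 0} with hS
    have hSne : S.Nonempty := by
      by_contra hall
      rw [Set.not_nonempty_iff_eq_empty] at hall
      apply hne
      ext i j
      have : (i, j) ∉ S := by rw [hall]; exact Set.notMem_empty _
      simp only [hS, Set.mem_setOf_eq, not_not] at this
      linarith
    have hyv : ∀ i j, y i j = a * y1 i j + b * y2 i j := by
      intro i j
      rw [← hsum]
      simp [Matrix.add_apply, Matrix.smul_apply, smul_eq_mul]
    have hsuppy : S ⊆ suppSet y := by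
      rintro ⟨i, j⟩ hp
      simp only [hS, Set.mem_setOf_eq] at hp
      have hy1 := h1.1 i j
      have hy2 := h2.1 i j
      have hy0 := hy.1 i j
      rcases lt_or_eq_of_le hy0 with hlt | heq
      · exact hlt
      · exfalso
        have h0 : a * y1 i j + b * y2 i j = 0 := by rw [← hyv i j, ← heq]
        have e1 : y1 i j = 0 := by nlinarith
        have e2 : y2 i j = 0 := by nlinarith
        exact hp (by rw [e1, e2]; ring)
    have hrowS : ∀ p ∈ S, ∃ i', i' ≠ p.1 ∧ (i', p.2) ∈ S := by
      rintro ⟨i, j⟩ hp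
      by_contra hno
      push_neg at hno
      have hz : ∀ i', i' ≠ i → y1 i' j - y2 i' j = 0 := by
        intro i' hi'
        by_contra hnz
        exact (hno i' hi') hnz
      have hcolsum : ∑ i', (y1 i' j - y2 i' j) = 0 := by
        rw [Finset.sum_sub_distrib, h1.2.2 j, h2.2.2 j]
        ring
      rw [Finset.sum_eq_single i (fun b _ hb => hz b hb) (by simp)] at hcolsum
      exact hp hcolsum
    have hcolS : ∀ p ∈ S, ∃ j', j' ≠ p.2 ∧ (p.1, j') ∈ S := by
      rintro ⟨i, j⟩ hp
      by_contra hno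
      push_neg at hno
      have hz : ∀ j', j' ≠ j → y1 i j' - y2 i j' = 0 := by
        intro j' hj'
        by_contra hnz
        exact (hno j' hj') hnz
      have hrowsum : ∑ j', (y1 i j' - y2 i j') = 0 := by
        rw [Finset.sum_sub_distrib, h1.2.1 i, h2.2.1 i]
        ring
      rw [Finset.sum_eq_single j (fun b _ hb => hz b hb) (by simp)] at hrowsum
      exact hp hrowsum
    obtain ⟨I, J, hIJ, hI, hJ, hE⟩ := exists_walk S hSne hrowS hcolS
    obtain ⟨D, hDS, hDcyc⟩ := exists_cycle S I J hIJ hI hJ hE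
    exact hnc ⟨D, hDS.trans hsuppy, hDcyc⟩
  subst h12
  have hy1 : y1 = y := by
    rw [← hsum, ← add_smul, hab, one_smul]
  exact ⟨hy1, hy1⟩

theorem vertex_iff_forest (N1 N2 : ℕ) (hN1 : 0 < N1) (hN2 : 0 < N2)
    (u : Fin N1 → ℝ) (v : Fin N2 → ℝ)
    (hu : ∀ i, 0 < u i) (hv : ∀ j, 0 < v j)
    (huv : ∑ i, u i = ∑ j, v j)
    (y : Matrix (Fin N1) (Fin N2) ℝ) (hy : y ∈ TP N1 N2 u v) :
    y ∈ Set.extremePoints ℝ (TP N1 N2 u v) ↔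
      ¬ ∃ D : Set (Fin N1 × Fin N2), D ⊆ suppSet y ∧ IsCycleSet D := by
  constructor
  · intro hext hcy
    obtain ⟨D, hD, hc⟩ := hcy
    exact not_extreme_of_cycle hy D hD hc hext
  · exact extreme_of_no_cycle hy
end

section
/- The transportation polytope TP(u,v) is non-degenerate (i.e., every vertex of TP(u,v) has exactly N1+N2−1 nonzero entries) if and only if there are no nonempty proper subsets I ⊊ {1,…,N1} and J ⊊ {1,…,N2} with ∑_{i∈I} u_i = ∑_{j∈J} v_j. -/
open scoped BigOperators

namespace TPaux

variable {N1 N2 : ℕ}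


variable {N1 N2 : ℕ}

/-- row and column sums, as a linear map -/
def rcMap (N1 N2 : ℕ) : Matrix (Fin N1) (Fin N2) ℝ →ₗ[ℝ] (Fin N1 → ℝ) × (Fin N2 → ℝ) where
  toFun z := (fun i => ∑ j, z i j, fun j => ∑ i, z i j)
  map_add' z w := by
    ext x <;> simp [Matrix.add_apply, Finset.sum_add_distrib]
  map_smul' c z := by
    ext x <;> simp [Matrix.smul_apply, Finset.mul_sum, smul_eq_mul]

/-- extension of a vector on S to a matrix supported on S -/
def embMap (S : Finset (Fin N1 × Fin N2)) : (↥S → ℝ) →ₗ[ℝ] Matrix (Fin N1) (Fin N2) ℝ where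
  toFun x := fun i j => if h : (i, j) ∈ S then x ⟨(i, j), h⟩ else 0
  map_add' x y := by
    funext i j
    change _ = (if h : (i, j) ∈ S then x ⟨(i, j), h⟩ else 0) + (if h : (i, j) ∈ S then y ⟨(i, j), h⟩ else 0)
    by_cases h : (i, j) ∈ S <;> simp [Matrix.add_apply, h]
  map_smul' c x := by
    funext i j
    change _ = c * (if h : (i, j) ∈ S then x ⟨(i, j), h⟩ else 0)
    by_cases h : (i, j) ∈ S <;> simp [Matrix.smul_apply, h]

lemma rcMap_apply (z : Matrix (Fin N1) (Fin N2) ℝ) :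
    rcMap N1 N2 z = (fun i => ∑ j, z i j, fun j => ∑ i, z i j) := rfl

lemma embMap_apply (S : Finset (Fin N1 × Fin N2)) (x : ↥S → ℝ) (i : Fin N1) (j : Fin N2) :
    embMap S x i j = if h : (i, j) ∈ S then x ⟨(i, j), h⟩ else 0 := rfl

/-- A nonzero perturbation supported on the support of `y` with zero row and column
sums contradicts extremality. -/
lemma pert_false {u : Fin N1 → ℝ} {v : Fin N2 → ℝ} {y : Matrix (Fin N1) (Fin N2) ℝ}
    (hext : y ∈ Set.extremePoints ℝ (TP N1 N2 u v))
    (z : Matrix (Fin N1) (Fin N2) ℝ) (hz : z ≠ 0)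
    (hsupp : ∀ i j, y i j = 0 → z i j = 0)
    (hrow : ∀ i, ∑ j, z i j = 0) (hcol : ∀ j, ∑ i, z i j = 0) : False := by
  obtain ⟨hy, hextr⟩ := hext
  obtain ⟨hpos, hru, hcv⟩ := hy
  -- find a nonzero entry of z
  have hzp : ∃ p : Fin N1 × Fin N2, z p.1 p.2 ≠ 0 := by
    by_contra h
    push_neg at h
    exact hz (by funext i j; exact h (i, j))
  obtain ⟨p0, hp0⟩ := hzp
  have hne : (Finset.univ : Finset (Fin N1 × Fin N2)).Nonempty := ⟨p0, Finset.mem_univ _⟩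
  set f : Fin N1 × Fin N2 → ℝ :=
    fun p => if z p.1 p.2 = 0 then 1 else y p.1 p.2 / (|z p.1 p.2| + 1) with hf
  set ε : ℝ := Finset.univ.inf' hne f with hεdef
  have hfpos : ∀ p : Fin N1 × Fin N2, 0 < f p := by
    intro p
    by_cases h : z p.1 p.2 = 0
    · simp [hf, h]
    · have hy0 : y p.1 p.2 ≠ 0 := fun h0 => h (hsupp _ _ h0)
      have : 0 < y p.1 p.2 := lt_of_le_of_ne (hpos _ _) (Ne.symm hy0)
      have habs : (0:ℝ) < |z p.1 p.2| + 1 := by positivity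
      simp only [hf, h, if_false]
      positivity
  have hε : 0 < ε := by
    rw [hεdef, Finset.lt_inf'_iff]
    exact fun p _ => hfpos p
  have hkey : ∀ i j, ε * |z i j| ≤ y i j := by
    intro i j
    by_cases h : z i j = 0
    · simp [h, hpos i j]
    · have h1 : ε ≤ f (i, j) := Finset.inf'_le _ (Finset.mem_univ _)
      have h2 : f (i, j) = y i j / (|z i j| + 1) := by simp [hf, h]
      have habs : (0:ℝ) < |z i j| + 1 := by positivity
      have h3 : ε * (|z i j| + 1) ≤ y i j := by
        calc ε * (|z i j| + 1) ≤ (y i j / (|z i j| + 1)) * (|z i j| + 1) := by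
              apply mul_le_mul_of_nonneg_right _ (le_of_lt habs)
              rw [← h2]; exact h1
          _ = y i j := div_mul_cancel₀ _ (ne_of_gt habs)
      nlinarith [abs_nonneg (z i j)]
  have habs_le : ∀ i j, |ε * z i j| ≤ y i j := by
    intro i j
    rw [abs_mul, abs_of_pos hε]
    exact hkey i j
  have hmem : ∀ s : ℝ, s = 1 ∨ s = -1 → y + (s * ε) • z ∈ TP N1 N2 u v := by
    intro s hs
    refine ⟨fun i j => ?_, fun i => ?_, fun j => ?_⟩
    · have h1 : (y + (s * ε) • z) i j = y i j + s * ε * z i j := by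
        simp [Matrix.add_apply, Matrix.smul_apply, smul_eq_mul]
      rw [h1]
      have := habs_le i j
      rcases hs with h | h <;> rw [h] <;> cases abs_le.mp this <;> linarith
    · have h1 : ∀ j, (y + (s * ε) • z) i j = y i j + s * ε * z i j := by
        intro j; simp [Matrix.add_apply, Matrix.smul_apply, smul_eq_mul]
      simp only [h1, Finset.sum_add_distrib, hru i, ← Finset.mul_sum, hrow i, mul_zero, add_zero]
    · have h1 : ∀ i, (y + (s * ε) • z) i j = y i j + s * ε * z i j := by
        intro i; simp [Matrix.add_apply, Matrix.smul_apply, smul_eq_mul]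
      simp only [h1, Finset.sum_add_distrib, hcv j, ← Finset.mul_sum, hcol j, mul_zero, add_zero]
  have hm1 := hmem 1 (Or.inl rfl)
  have hm2 := hmem (-1) (Or.inr rfl)
  have hseg : y ∈ openSegment ℝ (y + (1 * ε) • z) (y + ((-1) * ε) • z) := by
    refine ⟨1/2, 1/2, by norm_num, by norm_num, by norm_num, ?_⟩
    funext i j
    simp [Matrix.add_apply, Matrix.smul_apply, smul_eq_mul]
    ring
  have heq := (hextr hm1 hm2 hseg)
  apply hp0
  have h2 : (y + (1 * ε) • z) p0.1 p0.2 = y p0.1 p0.2 := by rw [heq]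
  simp only [Matrix.add_apply, Matrix.smul_apply, smul_eq_mul, one_mul] at h2
  have : ε * z p0.1 p0.2 = 0 := by linarith
  exact (mul_eq_zero.mp this).resolve_left (ne_of_gt hε)




noncomputable def suppF (y : Matrix (Fin N1) (Fin N2) ℝ) : Finset (Fin N1 × Fin N2) :=
  Finset.univ.filter fun p => y p.1 p.2 ≠ 0

lemma card_le_finrank {u : Fin N1 → ℝ} {v : Fin N2 → ℝ} {y : Matrix (Fin N1) (Fin N2) ℝ}
    (hext : y ∈ Set.extremePoints ℝ (TP N1 N2 u v))
    (K : Submodule ℝ ((Fin N1 → ℝ) × (Fin N2 → ℝ)))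
    (hK : ∀ z : Matrix (Fin N1) (Fin N2) ℝ, (∀ i j, z i j ≠ 0 → y i j ≠ 0) →
      rcMap N1 N2 z ∈ K) :
    (suppF y).card ≤ Module.finrank ℝ K := by
  set S := suppF y with hS
  set φ : (↥S → ℝ) →ₗ[ℝ] (Fin N1 → ℝ) × (Fin N2 → ℝ) := (rcMap N1 N2).comp (embMap S) with hφ
  have hsuppz : ∀ x : ↥S → ℝ, ∀ i j, embMap S x i j ≠ 0 → y i j ≠ 0 := by
    intro x i j hne
    rw [embMap_apply] at hne
    by_cases h : (i, j) ∈ S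
    · exact (Finset.mem_filter.mp h).2
    · simp [h] at hne
  have hinj : Function.Injective φ := by
    rw [injective_iff_map_eq_zero]
    intro x hx
    by_contra hx0
    set z := embMap S x with hz
    have hzne : z ≠ 0 := by
      intro h0
      apply hx0
      funext p
      have := congrFun (congrFun h0 p.val.1) p.val.2
      rw [hz, embMap_apply] at this
      have hp : (p.val.1, p.val.2) ∈ S := by
        simpa using p.prop
      rw [dif_pos hp] at this
      simpa using this
    have hrc : rcMap N1 N2 z = 0 := hx
    rw [rcMap_apply] at hrc
    have hr : ∀ i, ∑ j, z i j = 0 := fun i => congrFun (congrArg Prod.fst hrc) i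
    have hc : ∀ j, ∑ i, z i j = 0 := fun j => congrFun (congrArg Prod.snd hrc) j
    refine pert_false hext z hzne (fun i j h0 => ?_) hr hc
    by_contra hne
    exact (hsuppz x i j hne) h0
  have hmemK : ∀ x : ↥S → ℝ, φ x ∈ K := fun x => hK _ (hsuppz x)
  set φ' : (↥S → ℝ) →ₗ[ℝ] K := φ.codRestrict K hmemK with hφ'
  have hinj' : Function.Injective φ' := by
    intro a b h
    apply hinj
    have := congrArg (Subtype.val) h
    simpa [hφ', LinearMap.codRestrict_apply] using this
  have := LinearMap.finrank_le_finrank_of_injective hinj'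
  rwa [Module.finrank_pi, Fintype.card_coe] at this




/-- the functional (a,b) ↦ ∑_{i∈I} a i - ∑_{j∈J} b j -/
def gIJ (N1 N2 : ℕ) (I : Finset (Fin N1)) (J : Finset (Fin N2)) :
    ((Fin N1 → ℝ) × (Fin N2 → ℝ)) →ₗ[ℝ] ℝ where
  toFun p := ∑ i ∈ I, p.1 i - ∑ j ∈ J, p.2 j
  map_add' p q := by simp [Finset.sum_add_distrib]; ring
  map_smul' c p := by simp [Finset.mul_sum, smul_eq_mul, mul_sub]

lemma gIJ_single (I : Finset (Fin N1)) (J : Finset (Fin N2)) (i0 : Fin N1) (r : ℝ) :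
    gIJ N1 N2 I J (Pi.single i0 r, 0) = if i0 ∈ I then r else 0 := by
  simp [gIJ, Pi.single_apply, Finset.sum_ite_eq']

lemma finrank_prod_pi : Module.finrank ℝ ((Fin N1 → ℝ) × (Fin N2 → ℝ)) = N1 + N2 := by
  rw [Module.finrank_prod, Module.finrank_pi, Module.finrank_pi]
  simp

/-- kernel of the "total mass" functional has dimension N1+N2-1 -/
lemma finrank_ker_total (hN1 : 0 < N1) :
    Module.finrank ℝ (LinearMap.ker (gIJ N1 N2 Finset.univ Finset.univ)) = N1 + N2 - 1 := by
  set g := gIJ N1 N2 (Finset.univ : Finset (Fin N1)) (Finset.univ : Finset (Fin N2))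
  have hsurj : Function.Surjective g := by
    intro r
    refine ⟨(Pi.single ⟨0, hN1⟩ r, 0), ?_⟩
    rw [gIJ_single, if_pos (Finset.mem_univ _)]
  have h1 := LinearMap.finrank_range_add_finrank_ker g
  rw [finrank_prod_pi, LinearMap.range_eq_top.mpr hsurj, finrank_top, Module.finrank_self] at h1
  omega

/-- the paired functional for blocks -/
def gG (N1 N2 : ℕ) (I : Finset (Fin N1)) (J : Finset (Fin N2)) :
    ((Fin N1 → ℝ) × (Fin N2 → ℝ)) →ₗ[ℝ] ℝ × ℝ :=
  (gIJ N1 N2 I J).prod (gIJ N1 N2 Iᶜ Jᶜ)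

lemma finrank_ker_gG (I : Finset (Fin N1)) (J : Finset (Fin N2))
    (hI : I.Nonempty) (hIc : Iᶜ.Nonempty) :
    Module.finrank ℝ (LinearMap.ker (gG N1 N2 I J)) = N1 + N2 - 2 := by
  obtain ⟨i0, hi0⟩ := hI
  obtain ⟨i1, hi1⟩ := hIc
  have hi1' : i1 ∉ I := by simpa using hi1
  have hi0' : i0 ∉ Iᶜ := by simpa using hi0
  have hsurj : Function.Surjective (gG N1 N2 I J) := by
    rintro ⟨r, s⟩
    refine ⟨(Pi.single i0 r, 0) + (Pi.single i1 s, 0), ?_⟩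
    rw [map_add]
    have e1 : gG N1 N2 I J (Pi.single i0 r, 0) = (r, 0) := by
      simp [gG, LinearMap.prod_apply, gIJ_single, hi0, hi0']
    have e2 : gG N1 N2 I J (Pi.single i1 s, 0) = (0, s) := by
      simp [gG, LinearMap.prod_apply, gIJ_single, hi1, hi1']
    rw [e1, e2]
    simp
  have h1 := LinearMap.finrank_range_add_finrank_ker (gG N1 N2 I J)
  rw [finrank_prod_pi, LinearMap.range_eq_top.mpr hsurj, finrank_top] at h1
  rw [Module.finrank_prod, Module.finrank_self] at h1
  omega




lemma block_sum (I : Finset (Fin N1)) (J : Finset (Fin N2))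
    (z : Matrix (Fin N1) (Fin N2) ℝ)
    (h : ∀ i j, z i j ≠ 0 → ((i ∈ I ∧ j ∈ J) ∨ (i ∉ I ∧ j ∉ J))) :
    ∑ i ∈ I, ∑ j, z i j = ∑ j ∈ J, ∑ i, z i j := by
  have h1 : ∀ i ∈ I, ∑ j, z i j = ∑ j ∈ J, z i j := by
    intro i hi
    rw [← Finset.sum_subset (Finset.subset_univ J)]
    intro j _ hj
    by_contra hne
    rcases h i j hne with ⟨_, hJ⟩ | ⟨hI, _⟩
    · exact hj hJ
    · exact hI hi
  have h2 : ∀ j ∈ J, ∑ i, z i j = ∑ i ∈ I, z i j := by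
    intro j hj
    rw [← Finset.sum_subset (Finset.subset_univ I)]
    intro i _ hi
    by_contra hne
    rcases h i j hne with ⟨hI, _⟩ | ⟨_, hJ⟩
    · exact hi hI
    · exact hJ hj
  rw [Finset.sum_congr rfl h1, Finset.sum_congr rfl h2, Finset.sum_comm]




/-- the evaluation map (a,b) ↦ ((i,j) ↦ a i + b j) on the support -/
def psiMap (S : Finset (Fin N1 × Fin N2)) :
    ((Fin N1 → ℝ) × (Fin N2 → ℝ)) →ₗ[ℝ] (↥S → ℝ) where
  toFun p := fun q => p.1 q.val.1 + p.2 q.val.2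
  map_add' p q := by funext x; simp; ring
  map_smul' c p := by funext x; simp [smul_eq_mul]; ring

/-- If an element of TP has small support, we find a splitting pair (I, J). -/
lemma exists_IJ_of_small_support (hN1 : 0 < N1) (hN2 : 0 < N2)
    {u : Fin N1 → ℝ} {v : Fin N2 → ℝ} (hu : ∀ i, 0 < u i) (hv : ∀ j, 0 < v j)
    {y : Matrix (Fin N1) (Fin N2) ℝ} (hy : y ∈ TP N1 N2 u v)
    (hcard : (suppF y).card ≤ N1 + N2 - 2) :
    ∃ (I : Finset (Fin N1)) (J : Finset (Fin N2)),
      I.Nonempty ∧ I ≠ Finset.univ ∧ J.Nonempty ∧ J ≠ Finset.univ ∧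
      ∑ i ∈ I, u i = ∑ j ∈ J, v j := by
  obtain ⟨hpos, hru, hcv⟩ := hy
  set S := suppF y with hS
  -- each row and column has a support element
  have hrowsup : ∀ i, ∃ j, y i j ≠ 0 := by
    intro i
    by_contra h
    push_neg at h
    have : ∑ j, y i j = 0 := Finset.sum_eq_zero fun j _ => h j
    have := hru i
    have := hu i
    linarith
  have hcolsup : ∀ j, ∃ i, y i j ≠ 0 := by
    intro j
    by_contra h
    push_neg at h
    have : ∑ i, y i j = 0 := Finset.sum_eq_zero fun i _ => h i
    have := hcv j
    have := hv j
    linarith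
  -- rank-nullity for psi
  set ψ := psiMap (N1 := N1) (N2 := N2) S with hψ
  have h1 := LinearMap.finrank_range_add_finrank_ker ψ
  have hdom : Module.finrank ℝ ((Fin N1 → ℝ) × (Fin N2 → ℝ)) = N1 + N2 := by
    rw [Module.finrank_prod, Module.finrank_pi, Module.finrank_pi]; simp
  have hrange : Module.finrank ℝ (LinearMap.range ψ) ≤ S.card := by
    have := (LinearMap.range ψ).finrank_le
    rwa [Module.finrank_pi, Fintype.card_coe] at this
  have hker2 : 2 ≤ Module.finrank ℝ (LinearMap.ker ψ) := by
    rw [hdom] at h1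
    omega
  -- the line spanned by (1, -1)
  set e : (Fin N1 → ℝ) × (Fin N2 → ℝ) := ((fun _ => (1:ℝ)), (fun _ => (-1:ℝ))) with he
  have hene : e ≠ 0 := by
    intro h
    have := congrFun (congrArg Prod.fst h) ⟨0, hN1⟩
    simpa [he] using this
  have hnotle : ¬ LinearMap.ker ψ ≤ Submodule.span ℝ {e} := by
    intro hle
    have := Submodule.finrank_mono hle
    rw [finrank_span_singleton hene] at this
    omega
  obtain ⟨w, hwker, hwL⟩ := SetLike.not_le_iff_exists.mp hnotle
  have hab : ∀ i j, y i j ≠ 0 → w.1 i + w.2 j = 0 := by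
    intro i j hne
    have hmem : (i, j) ∈ S := by simp [hS, suppF, hne]
    have := congrFun (LinearMap.mem_ker.mp hwker) ⟨(i, j), hmem⟩
    simpa [hψ, psiMap] using this
  -- w.1 is non-constant
  have hnc : ∃ i0 i1, w.1 i0 ≠ w.1 i1 := by
    by_contra h
    push_neg at h
    apply hwL
    set c := w.1 ⟨0, hN1⟩ with hc
    have ha : ∀ i, w.1 i = c := fun i => h i ⟨0, hN1⟩
    have hb : ∀ j, w.2 j = -c := by
      intro j
      obtain ⟨i, hi⟩ := hcolsup j
      have := hab i j hi
      rw [ha i] at this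
      linarith only [this]
    rw [Submodule.mem_span_singleton]
    refine ⟨c, ?_⟩
    rw [he]
    apply Prod.ext
    · funext i; simp [ha i]
    · funext j; simp [hb j]
  obtain ⟨i0, i1, hi01⟩ := hnc
  set t := w.1 i0 with ht
  set I : Finset (Fin N1) := Finset.univ.filter (fun i => w.1 i = t) with hI
  set J : Finset (Fin N2) := Finset.univ.filter (fun j => w.2 j = -t) with hJ
  have hi0I : i0 ∈ I := by simp [hI, ht]
  have hi1I : i1 ∉ I := by simp [hI]; exact fun h => hi01 (h.symm ▸ rfl)
  have hblock : ∀ i j, y i j ≠ 0 → ((i ∈ I ∧ j ∈ J) ∨ (i ∉ I ∧ j ∉ J)) := by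
    intro i j hne
    have h0 := hab i j hne
    by_cases hiI : i ∈ I
    · left
      refine ⟨hiI, ?_⟩
      have : w.1 i = t := by simpa [hI] using hiI
      simp only [hJ, Finset.mem_filter, Finset.mem_univ, true_and]; linarith only [this, h0]
    · right
      refine ⟨hiI, ?_⟩
      simp only [hJ, Finset.mem_filter, Finset.mem_univ, true_and]
      intro hbj
      apply hiI
      simp only [hI, Finset.mem_filter, Finset.mem_univ, true_and]
      linarith only [h0, hbj]
  refine ⟨I, J, ⟨i0, hi0I⟩, fun h => hi1I (h ▸ Finset.mem_univ i1), ?_, ?_, ?_⟩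
  · obtain ⟨j, hj⟩ := hrowsup i0
    rcases hblock i0 j hj with ⟨_, hjJ⟩ | ⟨hiI, _⟩
    · exact ⟨j, hjJ⟩
    · exact absurd hi0I hiI
  · obtain ⟨j, hj⟩ := hrowsup i1
    rcases hblock i1 j hj with ⟨hiI, _⟩ | ⟨_, hjJ⟩
    · exact absurd hiI hi1I
    · exact fun h => hjJ (h ▸ Finset.mem_univ j)
  · have := block_sum I J y hblock
    calc ∑ i ∈ I, u i = ∑ i ∈ I, ∑ j, y i j := by
          exact Finset.sum_congr rfl fun i _ => (hru i).symm
      _ = ∑ j ∈ J, ∑ i, y i j := this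
      _ = ∑ j ∈ J, v j := Finset.sum_congr rfl fun j _ => hcv j




instance (N1 N2 : ℕ) : LocallyConvexSpace ℝ (Matrix (Fin N1) (Fin N2) ℝ) :=
  (inferInstance : LocallyConvexSpace ℝ (Fin N1 → Fin N2 → ℝ))

def Fface (N1 N2 : ℕ) (u : Fin N1 → ℝ) (v : Fin N2 → ℝ)
    (I : Finset (Fin N1)) (J : Finset (Fin N2)) : Set (Matrix (Fin N1) (Fin N2) ℝ) :=
  {y ∈ TP N1 N2 u v | ∀ i j, y i j ≠ 0 → ((i ∈ I ∧ j ∈ J) ∨ (i ∉ I ∧ j ∉ J))}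

lemma isExtreme_Fface (u : Fin N1 → ℝ) (v : Fin N2 → ℝ)
    (I : Finset (Fin N1)) (J : Finset (Fin N2)) :
    IsExtreme ℝ (TP N1 N2 u v) (Fface N1 N2 u v I J) := by
  constructor
  · exact fun y hy => hy.1
  · rintro x1 hx1 x2 hx2 x ⟨hxTP, hxsupp⟩ ⟨a, b, ha, hb, hab, hsum⟩
    have key : ∀ i j, ¬((i ∈ I ∧ j ∈ J) ∨ (i ∉ I ∧ j ∉ J)) → x1 i j = 0 ∧ x2 i j = 0 := by
      intro i j hblock
      have hx0 : x i j = 0 := by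
        by_contra h
        exact hblock (hxsupp i j h)
      have hs : a * x1 i j + b * x2 i j = 0 := by
        have := congrFun (congrFun hsum i) j
        simp only [Matrix.add_apply, Matrix.smul_apply, smul_eq_mul] at this
        rw [hx0] at this
        exact this
      have h1 := hx1.1 i j
      have h2 := hx2.1 i j
      constructor <;> nlinarith
    · refine ⟨hx1, fun i j h => ?_⟩
      by_contra hblock
      exact h (key i j hblock).1

lemma isCompact_Fface (u : Fin N1 → ℝ) (v : Fin N2 → ℝ)
    (I : Finset (Fin N1)) (J : Finset (Fin N2)) :
    IsCompact (Fface N1 N2 u v I J) := by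
  have hev : ∀ (i : Fin N1) (j : Fin N2),
      Continuous fun y : Matrix (Fin N1) (Fin N2) ℝ => y i j :=
    fun i j => (continuous_apply j).comp (continuous_apply i)
  -- closedness
  have hclosed : IsClosed (Fface N1 N2 u v I J) := by
    have h1 : IsClosed {y : Matrix (Fin N1) (Fin N2) ℝ | ∀ i j, 0 ≤ y i j} := by
      rw [Set.setOf_forall]
      refine isClosed_iInter fun i => ?_
      rw [Set.setOf_forall]
      exact isClosed_iInter fun j => isClosed_le continuous_const (hev i j)
    have h2 : IsClosed {y : Matrix (Fin N1) (Fin N2) ℝ | ∀ i, ∑ j, y i j = u i} := by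
      rw [Set.setOf_forall]
      exact isClosed_iInter fun i =>
        isClosed_eq (continuous_finset_sum _ fun j _ => hev i j) continuous_const
    have h3 : IsClosed {y : Matrix (Fin N1) (Fin N2) ℝ | ∀ j, ∑ i, y i j = v j} := by
      rw [Set.setOf_forall]
      exact isClosed_iInter fun j =>
        isClosed_eq (continuous_finset_sum _ fun i _ => hev i j) continuous_const
    have h4 : IsClosed {y : Matrix (Fin N1) (Fin N2) ℝ |
        ∀ i j, y i j ≠ 0 → ((i ∈ I ∧ j ∈ J) ∨ (i ∉ I ∧ j ∉ J))} := by
      rw [Set.setOf_forall]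
      refine isClosed_iInter fun i => ?_
      rw [Set.setOf_forall]
      refine isClosed_iInter fun j => ?_
      by_cases hbl : (i ∈ I ∧ j ∈ J) ∨ (i ∉ I ∧ j ∉ J)
      · have : {y : Matrix (Fin N1) (Fin N2) ℝ | y i j ≠ 0 → ((i ∈ I ∧ j ∈ J) ∨ (i ∉ I ∧ j ∉ J))}
            = Set.univ := by
          ext y; simp [hbl]
        rw [this]; exact isClosed_univ
      · have : {y : Matrix (Fin N1) (Fin N2) ℝ | y i j ≠ 0 → ((i ∈ I ∧ j ∈ J) ∨ (i ∉ I ∧ j ∉ J))}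
            = {y | y i j = 0} := by
          ext y
          simp only [Set.mem_setOf_eq]
          constructor
          · intro h
            by_contra hne
            exact hbl (h hne)
          · intro h hne
            exact absurd h hne
        rw [this]
        exact isClosed_eq (hev i j) continuous_const
    have : Fface N1 N2 u v I J = ({y | ∀ i j, 0 ≤ y i j} ∩ {y | ∀ i, ∑ j, y i j = u i}
        ∩ {y | ∀ j, ∑ i, y i j = v j}) ∩ {y : Matrix (Fin N1) (Fin N2) ℝ |
        ∀ i j, y i j ≠ 0 → ((i ∈ I ∧ j ∈ J) ∨ (i ∉ I ∧ j ∉ J))} := by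
      ext y
      simp only [Fface, TP, Set.mem_setOf_eq, Set.mem_inter_iff]
      tauto
    rw [this]
    exact (((h1.inter h2).inter h3).inter h4)
  -- bounded inside a compact box
  have hbox : IsCompact {y : Matrix (Fin N1) (Fin N2) ℝ | ∀ i j, y i j ∈ Set.Icc 0 (u i)} := by
    have : {y : Matrix (Fin N1) (Fin N2) ℝ | ∀ i j, y i j ∈ Set.Icc 0 (u i)}
        = Set.univ.pi fun i : Fin N1 => Set.univ.pi fun _ : Fin N2 => Set.Icc (0:ℝ) (u i) := by
      ext y
      simp only [Set.mem_setOf_eq, Set.mem_pi, Set.mem_univ, true_implies]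
      constructor
      · intro h i _
        rw [Set.mem_pi]
        intro j _
        exact h i j
      · intro h i j
        exact Set.mem_pi.mp (h i (Set.mem_univ i)) j (Set.mem_univ j)
    rw [this]
    exact isCompact_univ_pi fun i => isCompact_univ_pi fun _ => isCompact_Icc
  refine hbox.of_isClosed_subset hclosed ?_
  rintro y ⟨⟨hpos, hru, _⟩, _⟩ 
  intro i j
  refine ⟨hpos i j, ?_⟩
  rw [← hru i]
  exact Finset.single_le_sum (f := fun j' => y i j') (fun j' _ => hpos i j') (Finset.mem_univ j)

lemma Fface_nonempty (hN1 : 0 < N1) (hN2 : 0 < N2)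
    (u : Fin N1 → ℝ) (v : Fin N2 → ℝ) (hu : ∀ i, 0 < u i) (hv : ∀ j, 0 < v j)
    (huv : ∑ i, u i = ∑ j, v j)
    (I : Finset (Fin N1)) (J : Finset (Fin N2))
    (hIne : I.Nonempty) (hInu : I ≠ Finset.univ) (hJnu : J ≠ Finset.univ)
    (hsum : ∑ i ∈ I, u i = ∑ j ∈ J, v j) :
    (Fface N1 N2 u v I J).Nonempty := by
  classical
  set σ : ℝ := ∑ i ∈ I, u i with hσdef
  have hσ : 0 < σ := Finset.sum_pos (fun i _ => hu i) hIne
  have hIcne : Iᶜ.Nonempty := by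
    obtain ⟨i1, hi1⟩ := Finset.exists_of_ssubset (lt_of_le_of_ne (Finset.subset_univ I) hInu)
    exact ⟨i1, Finset.mem_compl.mpr hi1.2⟩
  have hJcne : Jᶜ.Nonempty := by
    obtain ⟨j1, hj1⟩ := Finset.exists_of_ssubset (lt_of_le_of_ne (Finset.subset_univ J) hJnu)
    exact ⟨j1, Finset.mem_compl.mpr hj1.2⟩
  set σ' : ℝ := ∑ i ∈ Iᶜ, u i with hσ'def
  have hσ' : 0 < σ' := Finset.sum_pos (fun i _ => hu i) hIcne
  have hsum' : ∑ j ∈ Jᶜ, v j = σ' := by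
    have h1 : ∑ i ∈ I, u i + ∑ i ∈ Iᶜ, u i = ∑ i, u i := I.sum_add_sum_compl u
    have h2 : ∑ j ∈ J, v j + ∑ j ∈ Jᶜ, v j = ∑ j, v j := J.sum_add_sum_compl v
    linarith [hσdef, hσ'def, hsum, huv]
  set y0 : Matrix (Fin N1) (Fin N2) ℝ := fun i j =>
    if i ∈ I ∧ j ∈ J then u i * v j / σ
    else if i ∉ I ∧ j ∉ J then u i * v j / σ' else 0 with hy0
  refine ⟨y0, ⟨⟨fun i j => ?_, fun i => ?_, fun j => ?_⟩, fun i j hne => ?_⟩⟩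
  · rw [hy0]
    dsimp only
    split_ifs with h1 h2
    · exact div_nonneg (mul_nonneg (hu i).le (hv j).le) hσ.le
    · exact div_nonneg (mul_nonneg (hu i).le (hv j).le) hσ'.le
    · exact le_refl 0
  · by_cases hiI : i ∈ I
    · have he : ∀ j, y0 i j = if j ∈ J then u i * v j / σ else 0 := by
        intro j
        rw [hy0]
        by_cases hjJ : j ∈ J <;> simp [hiI, hjJ]
      rw [Finset.sum_congr rfl fun j _ => he j, Fintype.sum_ite_mem]
      rw [show (∑ j ∈ J, u i * v j / σ) = (u i / σ) * ∑ j ∈ J, v j from by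
        rw [Finset.mul_sum]; exact Finset.sum_congr rfl fun j _ => by ring]
      rw [← hsum]
      field_simp
    · have he : ∀ j, y0 i j = if j ∈ Jᶜ then u i * v j / σ' else 0 := by
        intro j
        rw [hy0]
        by_cases hjJ : j ∈ J <;> simp [hiI, hjJ]
      rw [Finset.sum_congr rfl fun j _ => he j, Fintype.sum_ite_mem]
      rw [show (∑ j ∈ Jᶜ, u i * v j / σ') = (u i / σ') * ∑ j ∈ Jᶜ, v j from by
        rw [Finset.mul_sum]; exact Finset.sum_congr rfl fun j _ => by ring]
      rw [hsum']
      field_simp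
  · by_cases hjJ : j ∈ J
    · have he : ∀ i, y0 i j = if i ∈ I then u i * v j / σ else 0 := by
        intro i
        rw [hy0]
        by_cases hiI : i ∈ I <;> simp [hiI, hjJ]
      rw [Finset.sum_congr rfl fun i _ => he i, Fintype.sum_ite_mem]
      rw [show (∑ i ∈ I, u i * v j / σ) = (v j / σ) * ∑ i ∈ I, u i from by
        rw [Finset.mul_sum]; exact Finset.sum_congr rfl fun i _ => by ring]
      rw [← hσdef]
      field_simp
    · have he : ∀ i, y0 i j = if i ∈ Iᶜ then u i * v j / σ' else 0 := by
        intro i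
        rw [hy0]
        by_cases hiI : i ∈ I <;> simp [hiI, hjJ]
      rw [Finset.sum_congr rfl fun i _ => he i, Fintype.sum_ite_mem]
      rw [show (∑ i ∈ Iᶜ, u i * v j / σ') = (v j / σ') * ∑ i ∈ Iᶜ, u i from by
        rw [Finset.mul_sum]; exact Finset.sum_congr rfl fun i _ => by ring]
      rw [← hσ'def]
      field_simp
  · rw [hy0] at hne
    dsimp only at hne
    split_ifs at hne with h1 h2
    · exact Or.inl h1
    · exact Or.inr h2
    · exact absurd rfl hne


lemma mem_ker_total (z : Matrix (Fin N1) (Fin N2) ℝ) :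
    rcMap N1 N2 z ∈ LinearMap.ker (gIJ N1 N2 Finset.univ Finset.univ) := by
  rw [LinearMap.mem_ker, rcMap_apply]
  simp only [gIJ, LinearMap.coe_mk, AddHom.coe_mk]
  rw [sub_eq_zero]
  exact Finset.sum_comm

lemma mem_ker_gG (I : Finset (Fin N1)) (J : Finset (Fin N2))
    (z : Matrix (Fin N1) (Fin N2) ℝ)
    (hblock : ∀ i j, z i j ≠ 0 → ((i ∈ I ∧ j ∈ J) ∨ (i ∉ I ∧ j ∉ J))) :
    rcMap N1 N2 z ∈ LinearMap.ker (gG N1 N2 I J) := by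
  rw [LinearMap.mem_ker]
  have h1 : gIJ N1 N2 I J (rcMap N1 N2 z) = 0 := by
    rw [rcMap_apply]
    simp only [gIJ, LinearMap.coe_mk, AddHom.coe_mk]
    rw [sub_eq_zero]
    exact block_sum I J z hblock
  have h2 : gIJ N1 N2 Iᶜ Jᶜ (rcMap N1 N2 z) = 0 := by
    rw [rcMap_apply]
    simp only [gIJ, LinearMap.coe_mk, AddHom.coe_mk]
    rw [sub_eq_zero]
    refine block_sum Iᶜ Jᶜ z fun i j hne => ?_
    rcases hblock i j hne with ⟨hI, hJ⟩ | ⟨hI, hJ⟩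
    · right; simp [hI, hJ]
    · left; simp [hI, hJ]
  have : gG N1 N2 I J (rcMap N1 N2 z) = (gIJ N1 N2 I J (rcMap N1 N2 z),
      gIJ N1 N2 Iᶜ Jᶜ (rcMap N1 N2 z)) := rfl
  rw [this, h1, h2]
  rfl

lemma ncard_eq_card (y : Matrix (Fin N1) (Fin N2) ℝ) :
    {p : Fin N1 × Fin N2 | y p.1 p.2 ≠ 0}.ncard = (suppF y).card := by
  rw [show {p : Fin N1 × Fin N2 | y p.1 p.2 ≠ 0} = ↑(suppF y) from by
    ext p; simp [suppF]]
  exact Set.ncard_coe_finset _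

end TPaux

theorem nondegenerate_iff_no_equal_partial_sums (N1 N2 : ℕ) (hN1 : 0 < N1) (hN2 : 0 < N2)
    (u : Fin N1 → ℝ) (v : Fin N2 → ℝ)
    (hu : ∀ i, 0 < u i) (hv : ∀ j, 0 < v j)
    (huv : ∑ i, u i = ∑ j, v j) :
    Nondeg N1 N2 u v ↔
      ¬ ∃ (I : Finset (Fin N1)) (J : Finset (Fin N2)),
          I.Nonempty ∧ I ≠ Finset.univ ∧ J.Nonempty ∧ J ≠ Finset.univ ∧
          ∑ i ∈ I, u i = ∑ j ∈ J, v j := by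
  open TPaux in
  constructor
  · rintro hnd ⟨I, J, hIne, hInu, hJne, hJnu, hsum⟩
    obtain ⟨z, hzF⟩ := (isCompact_Fface u v I J).extremePoints_nonempty
      (Fface_nonempty hN1 hN2 u v hu hv huv I J hIne hInu hJnu hsum)
    have hzTP : z ∈ Set.extremePoints ℝ (TP N1 N2 u v) :=
      (isExtreme_Fface u v I J).extremePoints_subset_extremePoints hzF
    have hblock := hzF.1.2
    have hbound := card_le_finrank hzTP (LinearMap.ker (gG N1 N2 I J))
      (fun z' hz' => mem_ker_gG I J z' (fun i j hne => hblock i j (hz' i j hne)))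
    have hIcne : Iᶜ.Nonempty := by
      obtain ⟨i1, hi1⟩ := Finset.exists_of_ssubset (lt_of_le_of_ne (Finset.subset_univ I) hInu)
      exact ⟨i1, Finset.mem_compl.mpr hi1.2⟩
    rw [finrank_ker_gG I J hIne hIcne] at hbound
    have hcard := hnd z hzTP
    rw [ncard_eq_card] at hcard
    omega
  · intro hno y hy
    rw [ncard_eq_card]
    have hub := card_le_finrank hy (LinearMap.ker (gIJ N1 N2 Finset.univ Finset.univ))
      (fun z' _ => mem_ker_total z')
    rw [finrank_ker_total hN1] at hub
    by_contra hne
    have hcard : (suppF y).card ≤ N1 + N2 - 2 := by omega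
    obtain ⟨I, J, h1, h2, h3, h4, h5⟩ :=
      exists_IJ_of_small_support hN1 hN2 hu hv hy.1 hcard
    exact hno ⟨I, J, h1, h2, h3, h4, h5⟩
end

section
/- Let TP(u,v) be a non-degenerate transportation polytope, let F be the support tree of a fixed vertex of TP(u,v), and let (C,S) be a partially shaded tree for F. If some well-connected component of (C,S) contains no open node, then C is fully shaded; that is, S equals the edge set of C, and consequently C = F. -/
open scoped BigOperators

def bipGraph {N1 N2 : ℕ} (A : Set (Fin N1 × Fin N2)) : SimpleGraph (Fin N1 ⊕ Fin N2) where
  Adj x y := (∃ p ∈ A, x = Sum.inl p.1 ∧ y = Sum.inr p.2) ∨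
    (∃ p ∈ A, x = Sum.inr p.2 ∧ y = Sum.inl p.1)
  symm := by
    constructor
    rintro x y (⟨p, hp, rfl, rfl⟩ | ⟨p, hp, rfl, rfl⟩)
    · exact Or.inr ⟨p, hp, rfl, rfl⟩
    · exact Or.inl ⟨p, hp, rfl, rfl⟩
  loopless := by
    constructor
    rintro x (⟨p, hp, rfl, h⟩ | ⟨p, hp, rfl, h⟩) <;> simp at h

def wcSupply {N1 N2 : ℕ} (F S : Set (Fin N1 × Fin N2)) (i : Fin N1) : Prop :=
  ∀ j, (i, j) ∈ F → (i, j) ∈ S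

def wcDemand {N1 N2 : ℕ} (C S : Set (Fin N1 × Fin N2)) (j : Fin N2) : Prop :=
  ∀ i, (i, j) ∈ C → (i, j) ∈ S

def wcEdges {N1 N2 : ℕ} (F C S : Set (Fin N1 × Fin N2)) : Set (Fin N1 × Fin N2) :=
  {p | p ∈ S ∧ (wcSupply F S p.1 ∨ wcDemand C S p.2)}

def openNode {N1 N2 : ℕ} (F C S : Set (Fin N1 × Fin N2)) : Fin N1 ⊕ Fin N2 → Prop :=
  Sum.elim (fun i => ¬ wcSupply F S i) (fun j => ¬ wcDemand C S j)

def UNO {N1 N2 : ℕ} (F C S : Set (Fin N1 × Fin N2)) : Prop :=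
  ∀ K : (bipGraph (wcEdges F C S)).ConnectedComponent,
    ∃! z : Fin N1 ⊕ Fin N2,
      (bipGraph (wcEdges F C S)).connectedComponentMk z = K ∧ openNode F C S z

lemma ext_pt_kernel {N1 N2 : ℕ} {u : Fin N1 → ℝ} {v : Fin N2 → ℝ}
    {y : Matrix (Fin N1) (Fin N2) ℝ} (hy : y ∈ Set.extremePoints ℝ (TP N1 N2 u v))
    (d : Matrix (Fin N1) (Fin N2) ℝ)
    (hsupp : ∀ i j, y i j = 0 → d i j = 0)
    (hrow : ∀ i, ∑ j, d i j = 0) (hcol : ∀ j, ∑ i, d i j = 0) : d = 0 := by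
  classical
  by_contra hd
  obtain ⟨hyTP, hext⟩ := hy
  obtain ⟨hpos, hru, hcv⟩ := hyTP
  have hne : (Finset.univ.filter (fun p : Fin N1 × Fin N2 => d p.1 p.2 ≠ 0)).Nonempty := by
    by_contra h
    rw [Finset.not_nonempty_iff_eq_empty, Finset.filter_eq_empty_iff] at h
    apply hd
    ext i j
    have := h (Finset.mem_univ (i, j))
    simpa using not_not.mp this
  set s := Finset.univ.filter (fun p : Fin N1 × Fin N2 => d p.1 p.2 ≠ 0) with hs
  have hymem : ∀ p ∈ s, 0 < y p.1 p.2 := by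
    intro p hp
    rw [hs, Finset.mem_filter] at hp
    rcases hp with ⟨-, hdp⟩
    rcases lt_or_eq_of_le (hpos p.1 p.2) with h | h
    · exact h
    · exact absurd (hsupp p.1 p.2 h.symm) hdp
  set ε := s.inf' hne (fun p => y p.1 p.2 / |d p.1 p.2|) with hε
  have hεpos : 0 < ε := by
    rw [hε]
    rw [Finset.lt_inf'_iff]
    intro p hp
    rw [hs, Finset.mem_filter] at hp
    exact div_pos (hymem p (by rw [hs, Finset.mem_filter]; exact hp)) (abs_pos.mpr hp.2)
  have hbound : ∀ i j, ε * |d i j| ≤ y i j := by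
    intro i j
    by_cases h : d i j = 0
    · simp [h, hpos i j]
    · have hmem : (i, j) ∈ s := by rw [hs, Finset.mem_filter]; exact ⟨Finset.mem_univ _, h⟩
      have h1 : ε ≤ y i j / |d i j| := Finset.inf'_le _ hmem
      have h2 : (0:ℝ) < |d i j| := abs_pos.mpr h
      calc ε * |d i j| ≤ (y i j / |d i j|) * |d i j| := by
            exact mul_le_mul_of_nonneg_right h1 (le_of_lt h2)
        _ = y i j := div_mul_cancel₀ _ (ne_of_gt h2)
  have hmem1 : y + ε • d ∈ TP N1 N2 u v := by
    refine ⟨?_, ?_, ?_⟩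
    · intro i j
      have h1 := hbound i j
      have h2 : -(ε * |d i j|) ≤ ε * d i j := by
        have := neg_abs_le (d i j)
        nlinarith
      simp only [Matrix.add_apply, Matrix.smul_apply, smul_eq_mul]
      linarith
    · intro i
      simp only [Matrix.add_apply, Matrix.smul_apply, smul_eq_mul]
      rw [Finset.sum_add_distrib, ← Finset.mul_sum, hrow i, hru i]; ring
    · intro j
      simp only [Matrix.add_apply, Matrix.smul_apply, smul_eq_mul]
      rw [Finset.sum_add_distrib, ← Finset.mul_sum, hcol j, hcv j]; ring
  have hmem2 : y - ε • d ∈ TP N1 N2 u v := by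
    refine ⟨?_, ?_, ?_⟩
    · intro i j
      have h1 := hbound i j
      have h2 : ε * d i j ≤ ε * |d i j| := by
        have := le_abs_self (d i j)
        nlinarith
      simp only [Matrix.sub_apply, Matrix.smul_apply, smul_eq_mul]
      linarith
    · intro i
      simp only [Matrix.sub_apply, Matrix.smul_apply, smul_eq_mul]
      rw [Finset.sum_sub_distrib, ← Finset.mul_sum, hrow i, hru i]; ring
    · intro j
      simp only [Matrix.sub_apply, Matrix.smul_apply, smul_eq_mul]
      rw [Finset.sum_sub_distrib, ← Finset.mul_sum, hcol j, hcv j]; ring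
  have hseg : y ∈ openSegment ℝ (y + ε • d) (y - ε • d) := by
    refine ⟨1/2, 1/2, by norm_num, by norm_num, by norm_num, ?_⟩
    module
  have := hext hmem1 hmem2 hseg
  have h0 : ε • d = 0 := by
    have : y + ε • d = y := this
    linear_combination (norm := abel) this
  rcases smul_eq_zero.mp h0 with h | h
  · exact absurd h (ne_of_gt hεpos)
  · exact hd h

lemma split_contradiction {N1 N2 : ℕ} {u : Fin N1 → ℝ} {v : Fin N2 → ℝ}
    {y : Matrix (Fin N1) (Fin N2) ℝ} (hy : y ∈ Set.extremePoints ℝ (TP N1 N2 u v))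
    (hcard : {p : Fin N1 × Fin N2 | y p.1 p.2 ≠ 0}.ncard = N1 + N2 - 1)
    (A : Finset (Fin N1)) (B : Finset (Fin N2))
    (hvan : ∀ i j, y i j ≠ 0 → (i ∈ A ↔ j ∈ B))
    {i0 : Fin N1} (hi0 : i0 ∈ A) {i1 : Fin N1} (hi1 : i1 ∉ A) : False := by
  classical
  -- The support as a Finset
  set E : Finset (Fin N1 × Fin N2) :=
    Finset.univ.filter (fun p : Fin N1 × Fin N2 => y p.1 p.2 ≠ 0) with hE
  have hEcard : E.card = N1 + N2 - 1 := by
    rw [← hcard]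
    rw [Set.ncard_eq_toFinset_card']
    congr 1
    ext p
    simp [hE]
  -- the linear map from functions on E to (row sums, column sums)
  let mat : (E → ℝ) → Matrix (Fin N1) (Fin N2) ℝ :=
    fun c i j => if h : (i, j) ∈ E then c ⟨(i, j), h⟩ else 0
  let L : (E → ℝ) →ₗ[ℝ] (Fin N1 → ℝ) × (Fin N2 → ℝ) :=
    { toFun := fun c => (fun i => ∑ j, mat c i j, fun j => ∑ i, mat c i j)
      map_add' := by
        intro c c'
        have hm : ∀ i j, mat (c + c') i j = mat c i j + mat c' i j := by
          intro i j
          by_cases h : (i, j) ∈ E <;> simp [mat, h]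
        ext x
        · simp [hm, Finset.sum_add_distrib]
        · simp [hm, Finset.sum_add_distrib]
      map_smul' := by
        intro r c
        have hm : ∀ i j, mat (r • c) i j = r * mat c i j := by
          intro i j
          by_cases h : (i, j) ∈ E <;> simp [mat, h]
        ext x
        · simp [hm, Finset.mul_sum]
        · simp [hm, Finset.mul_sum] }
  -- L is injective
  have hLinj : Function.Injective L := by
    rw [← LinearMap.ker_eq_bot, LinearMap.ker_eq_bot']
    intro c hc
    have hc1 : ∀ i, ∑ j, mat c i j = 0 := fun i => congrFun (congrArg Prod.fst hc) i
    have hc2 : ∀ j, ∑ i, mat c i j = 0 := fun j => congrFun (congrArg Prod.snd hc) j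
    have hd0 : mat c = 0 := by
      apply ext_pt_kernel hy
      · intro i j hyij
        have : (i, j) ∉ E := by simp [hE, hyij]
        simp [mat, this]
      · exact hc1
      · exact hc2
    funext p
    have := congrFun (congrFun hd0 p.1.1) p.1.2
    simpa [mat, p.2] using this
  -- the functional pair
  let ψ : ((Fin N1 → ℝ) × (Fin N2 → ℝ)) →ₗ[ℝ] ℝ × ℝ :=
    { toFun := fun ab => (∑ i ∈ A, ab.1 i - ∑ j ∈ B, ab.2 j,
        ∑ i ∈ Aᶜ, ab.1 i - ∑ j ∈ Bᶜ, ab.2 j)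
      map_add' := by
        intro ab ab'
        simp [Finset.sum_add_distrib]
        constructor <;> ring
      map_smul' := by
        intro r ab
        simp only [smul_eq_mul, Prod.smul_mk, RingHom.id_apply, Prod.mk.injEq, Prod.smul_fst,
          Prod.smul_snd, Pi.smul_apply]
        constructor <;>
          rw [mul_sub, Finset.mul_sum, Finset.mul_sum] }
  -- range of L is in the kernel of ψ
  have hrange : ∀ c, ψ (L c) = 0 := by
    intro c
    have hvanE : ∀ i j, mat c i j ≠ 0 → (i ∈ A ↔ j ∈ B) := by
      intro i j h
      by_cases hmem : (i, j) ∈ E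
      · have : y i j ≠ 0 := by
          have := hmem
          rw [hE, Finset.mem_filter] at this
          exact this.2
        exact hvan i j this
      · exact absurd (by simp [mat, hmem]) h
    have key1 : ∑ i ∈ A, ∑ j, mat c i j = ∑ j ∈ B, ∑ i ∈ A, mat c i j := by
      have step : ∀ i ∈ A, ∑ j, mat c i j = ∑ j ∈ B, mat c i j := by
        intro i hi
        rw [← Finset.sum_subset (Finset.subset_univ B)]
        intro j _ hj
        by_contra h
        exact hj ((hvanE i j h).mp hi)
      rw [Finset.sum_congr rfl step, Finset.sum_comm]
    have key1' : ∑ j ∈ B, ∑ i, mat c i j = ∑ j ∈ B, ∑ i ∈ A, mat c i j := by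
      apply Finset.sum_congr rfl
      intro j hj
      rw [← Finset.sum_subset (Finset.subset_univ A)]
      intro i _ hi
      by_contra h
      exact hi ((hvanE i j h).mpr hj)
    have key2 : ∑ i ∈ Aᶜ, ∑ j, mat c i j = ∑ j ∈ Bᶜ, ∑ i ∈ Aᶜ, mat c i j := by
      have step : ∀ i ∈ Aᶜ, ∑ j, mat c i j = ∑ j ∈ Bᶜ, mat c i j := by
        intro i hi
        rw [Finset.mem_compl] at hi
        rw [← Finset.sum_subset (Finset.subset_univ Bᶜ)]
        intro j _ hj
        rw [Finset.mem_compl, not_not] at hj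
        by_contra h
        exact hi ((hvanE i j h).mpr hj)
      rw [Finset.sum_congr rfl step, Finset.sum_comm]
    have key2' : ∑ j ∈ Bᶜ, ∑ i, mat c i j = ∑ j ∈ Bᶜ, ∑ i ∈ Aᶜ, mat c i j := by
      apply Finset.sum_congr rfl
      intro j hj
      rw [Finset.mem_compl] at hj
      rw [← Finset.sum_subset (Finset.subset_univ Aᶜ)]
      intro i _ hi
      rw [Finset.mem_compl, not_not] at hi
      by_contra h
      exact hj ((hvanE i j h).mp hi)
    show ((_ : ℝ × ℝ)) = 0
    simp only [ψ, L, LinearMap.coe_mk, AddHom.coe_mk]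
    rw [Prod.mk_eq_zero]
    constructor
    · rw [key1, key1']; ring
    · rw [key2, key2']; ring
  -- ψ is surjective
  have hψsurj : Function.Surjective ψ := by
    rw [← LinearMap.range_eq_top]
    rw [Submodule.eq_top_iff']
    intro ⟨a, b⟩
    have h10 : ((1 : ℝ), (0 : ℝ)) ∈ LinearMap.range ψ := by
      refine ⟨((fun i => if i = i0 then 1 else 0), 0), ?_⟩
      simp only [ψ, LinearMap.coe_mk, AddHom.coe_mk]
      rw [Prod.mk.injEq]
      constructor
      · simp [Finset.sum_ite_eq' A i0, hi0]
      · simp [Finset.sum_ite_eq' Aᶜ i0, hi0]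
    have h01 : ((0 : ℝ), (1 : ℝ)) ∈ LinearMap.range ψ := by
      refine ⟨((fun i => if i = i1 then 1 else 0), 0), ?_⟩
      simp only [ψ, LinearMap.coe_mk, AddHom.coe_mk]
      rw [Prod.mk.injEq]
      constructor
      · simp [Finset.sum_ite_eq' A i1, hi1]
      · simp [Finset.sum_ite_eq' Aᶜ i1, hi1]
    have : (a, b) = a • ((1:ℝ), (0:ℝ)) + b • ((0:ℝ), (1:ℝ)) := by
      simp [Prod.ext_iff]
    rw [this]
    exact Submodule.add_mem _ (Submodule.smul_mem _ a h10) (Submodule.smul_mem _ b h01)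
  -- dimension counting
  have hker_fd : FiniteDimensional ℝ (LinearMap.ker ψ) := inferInstance
  have hdim1 : Module.finrank ℝ (E → ℝ) = E.card := by
    rw [Module.finrank_fintype_fun_eq_card, Fintype.card_coe]
  have hL' : ∃ L' : (E → ℝ) →ₗ[ℝ] (LinearMap.ker ψ), Function.Injective L' := by
    refine ⟨LinearMap.codRestrict (LinearMap.ker ψ) L (fun c => LinearMap.mem_ker.mpr (hrange c)), ?_⟩
    intro c c' h
    exact hLinj (congrArg Subtype.val h)
  obtain ⟨L', hL'inj⟩ := hL'
  have hineq : E.card ≤ Module.finrank ℝ (LinearMap.ker ψ) := by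
    rw [← hdim1]
    exact LinearMap.finrank_le_finrank_of_injective hL'inj
  have hrn := LinearMap.finrank_range_add_finrank_ker ψ
  have hrange_top : LinearMap.range ψ = ⊤ := LinearMap.range_eq_top.mpr hψsurj
  have hdimrange : Module.finrank ℝ (LinearMap.range ψ) = 2 := by
    rw [hrange_top, finrank_top]
    simp [Module.finrank_prod]
  have hdimdom : Module.finrank ℝ ((Fin N1 → ℝ) × (Fin N2 → ℝ)) = N1 + N2 := by
    simp [Module.finrank_prod, Module.finrank_fintype_fun_eq_card]
  have hN1two : 2 ≤ N1 := by
    have : i0 ≠ i1 := fun h => hi1 (h ▸ hi0)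
    have := Fintype.one_lt_card_iff_nontrivial.mpr ⟨⟨i0, i1, this⟩⟩
    rw [Fintype.card_fin] at this; omega
  rw [hdimrange, hdimdom] at hrn
  rw [hEcard] at hineq
  omega

theorem component_without_open_node_fully_shaded (N1 N2 : ℕ) (hN1 : 0 < N1) (hN2 : 0 < N2)
    (u : Fin N1 → ℝ) (v : Fin N2 → ℝ)
    (hu : ∀ i, 0 < u i) (hv : ∀ j, 0 < v j)
    (huv : ∑ i, u i = ∑ j, v j)
    (hnd : Nondeg N1 N2 u v)
    (yF yC : Matrix (Fin N1) (Fin N2) ℝ)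
    (hyF : yF ∈ Set.extremePoints ℝ (TP N1 N2 u v))
    (hyC : yC ∈ Set.extremePoints ℝ (TP N1 N2 u v))
    (S : Set (Fin N1 × Fin N2)) (hS : S ⊆ suppSet yC ∩ suppSet yF)
    (hcomp : ∃ x : Fin N1 ⊕ Fin N2,
      ∀ z : Fin N1 ⊕ Fin N2,
        (bipGraph (wcEdges (suppSet yF) (suppSet yC) S)).Reachable x z →
        ¬ openNode (suppSet yF) (suppSet yC) S z) :
    S = suppSet yC ∧ suppSet yC = suppSet yF := by
  classical
  obtain ⟨x, hx⟩ := hcomp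
  set G := bipGraph (wcEdges (suppSet yF) (suppSet yC) S) with hG
  obtain ⟨hFpos, hFr, hFc⟩ := hyF.1
  obtain ⟨hCpos, hCr, hCc⟩ := hyC.1
  set A : Finset (Fin N1) := Finset.univ.filter (fun i => G.Reachable x (Sum.inl i)) with hA
  set B : Finset (Fin N2) := Finset.univ.filter (fun j => G.Reachable x (Sum.inr j)) with hB
  -- nodes in the component are well connected
  have hAwc : ∀ i ∈ A, wcSupply (suppSet yF) S i := by
    intro i hi
    rw [hA, Finset.mem_filter] at hi
    have := hx _ hi.2
    simpa [openNode] using this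
  have hBwc : ∀ j ∈ B, wcDemand (suppSet yC) S j := by
    intro j hj
    rw [hB, Finset.mem_filter] at hj
    have := hx _ hj.2
    simpa [openNode] using this
  -- adjacency through well-connected edges
  have hF_to_B : ∀ i ∈ A, ∀ j, yF i j ≠ 0 → j ∈ B := by
    intro i hi j hne
    have hFij : (i, j) ∈ suppSet yF := lt_of_le_of_ne (hFpos i j) (Ne.symm hne)
    have hSij : (i, j) ∈ S := hAwc i hi j hFij
    have hwce : (i, j) ∈ wcEdges (suppSet yF) (suppSet yC) S := ⟨hSij, Or.inl (hAwc i hi)⟩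
    have hadj : G.Adj (Sum.inl i) (Sum.inr j) := Or.inl ⟨(i, j), hwce, rfl, rfl⟩
    rw [hA, Finset.mem_filter] at hi
    rw [hB, Finset.mem_filter]
    exact ⟨Finset.mem_univ _, hi.2.trans hadj.reachable⟩
  have hC_to_A : ∀ j ∈ B, ∀ i, yC i j ≠ 0 → i ∈ A := by
    intro j hj i hne
    have hCij : (i, j) ∈ suppSet yC := lt_of_le_of_ne (hCpos i j) (Ne.symm hne)
    have hSij : (i, j) ∈ S := hBwc j hj i hCij
    have hwce : (i, j) ∈ wcEdges (suppSet yF) (suppSet yC) S := ⟨hSij, Or.inr (hBwc j hj)⟩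
    have hadj : G.Adj (Sum.inr j) (Sum.inl i) := Or.inr ⟨(i, j), hwce, rfl, rfl⟩
    rw [hB, Finset.mem_filter] at hj
    rw [hA, Finset.mem_filter]
    exact ⟨Finset.mem_univ _, hj.2.trans hadj.reachable⟩
  -- A is nonempty
  have hAne : ∃ i, i ∈ A := by
    cases x with
    | inl i =>
      exact ⟨i, by rw [hA, Finset.mem_filter]; exact ⟨Finset.mem_univ _, SimpleGraph.Reachable.refl _⟩⟩
    | inr j =>
      have hjB : j ∈ B := by
        rw [hB, Finset.mem_filter]; exact ⟨Finset.mem_univ _, SimpleGraph.Reachable.refl _⟩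
      have hex : ∃ i, yC i j ≠ 0 := by
        by_contra h
        push_neg at h
        have : ∑ i, yC i j = 0 := Finset.sum_eq_zero (fun i _ => h i)
        rw [hCc j] at this
        exact (hv j).ne' this
      obtain ⟨i, hi⟩ := hex
      exact ⟨i, hC_to_A j hjB i hi⟩
  -- sum computations
  have hSA : ∑ i ∈ A, u i = ∑ i ∈ A, ∑ j ∈ B, yF i j := by
    apply Finset.sum_congr rfl
    intro i hi
    rw [← hFr i]
    symm
    rw [← Finset.sum_subset (Finset.subset_univ B)]
    intro j _ hj
    by_contra h
    exact hj (hF_to_B i hi j h)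
  have hSB : ∑ j ∈ B, v j = ∑ j ∈ B, ∑ i ∈ A, yC i j := by
    apply Finset.sum_congr rfl
    intro j hj
    rw [← hCc j]
    symm
    rw [← Finset.sum_subset (Finset.subset_univ A)]
    intro i _ hi
    by_contra h
    exact hi (hC_to_A j hj i h)
  have hle1 : ∑ i ∈ A, ∑ j ∈ B, yF i j ≤ ∑ j ∈ B, v j := by
    refine (Finset.sum_comm).trans_le ?_
    apply Finset.sum_le_sum
    intro j hj
    rw [← hFc j]
    exact Finset.sum_le_sum_of_subset_of_nonneg (Finset.subset_univ A)
      (fun i _ _ => hFpos i j)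
  have hle2 : ∑ j ∈ B, ∑ i ∈ A, yC i j ≤ ∑ i ∈ A, u i := by
    rw [Finset.sum_comm]
    apply Finset.sum_le_sum
    intro i hi
    rw [← hCr i]
    exact Finset.sum_le_sum_of_subset_of_nonneg (Finset.subset_univ B)
      (fun j _ _ => hCpos i j)
  have hAB : ∑ i ∈ A, u i = ∑ j ∈ B, v j := by
    have h1 : ∑ i ∈ A, u i ≤ ∑ j ∈ B, v j := hSA ▸ hle1
    have h2 : ∑ j ∈ B, v j ≤ ∑ i ∈ A, u i := hSB ▸ hle2
    linarith
  have htot : ∑ i ∈ A, ∑ j ∈ B, yC i j = ∑ i ∈ A, ∑ j, yC i j := by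
    calc ∑ i ∈ A, ∑ j ∈ B, yC i j = ∑ j ∈ B, ∑ i ∈ A, yC i j := Finset.sum_comm
      _ = ∑ j ∈ B, v j := hSB.symm
      _ = ∑ i ∈ A, u i := hAB.symm
      _ = ∑ i ∈ A, ∑ j, yC i j := Finset.sum_congr rfl (fun i _ => (hCr i).symm)
  have hperi : ∀ i ∈ A, ∑ j ∈ B, yC i j = ∑ j, yC i j := by
    have hle : ∀ i ∈ A, ∑ j ∈ B, yC i j ≤ ∑ j, yC i j := fun i _ =>
      Finset.sum_le_sum_of_subset_of_nonneg (Finset.subset_univ B) (fun j _ _ => hCpos i j)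
    exact (Finset.sum_eq_sum_iff_of_le hle).mp htot
  have hzero : ∀ i j, i ∈ A → j ∉ B → yC i j = 0 := by
    intro i j hiA hjB
    have h := hperi i hiA
    have hsplit : ∑ j ∈ B, yC i j + ∑ j ∈ Bᶜ, yC i j = ∑ j, yC i j :=
      Finset.sum_add_sum_compl B _
    have hzs : ∑ j ∈ Bᶜ, yC i j = 0 := by linarith
    exact (Finset.sum_eq_zero_iff_of_nonneg (fun j _ => hCpos i j)).mp hzs j
      (Finset.mem_compl.mpr hjB)
  have hvan : ∀ i j, yC i j ≠ 0 → (i ∈ A ↔ j ∈ B) := by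
    intro i j h
    constructor
    · intro hi
      by_contra hj
      exact h (hzero i j hi hj)
    · intro hj
      exact hC_to_A j hj i h
  have hAuniv : ∀ i, i ∈ A := by
    by_contra h
    push_neg at h
    obtain ⟨i1, hi1⟩ := h
    obtain ⟨i0, hi0⟩ := hAne
    exact split_contradiction hyC (hnd yC hyC) A B hvan hi0 hi1
  have hBuniv : ∀ j, j ∈ B := by
    by_contra h
    push_neg at h
    obtain ⟨j1, hj1⟩ := h
    have hAeq : ∑ i ∈ A, u i = ∑ i, u i := by
      rw [Finset.eq_univ_iff_forall.mpr hAuniv]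
    have h1 : ∑ j ∈ B, v j = ∑ j, v j := by rw [← hAB, hAeq, huv]
    have hsplit : ∑ j ∈ B, v j + ∑ j ∈ Bᶜ, v j = ∑ j, v j := Finset.sum_add_sum_compl B _
    have h2 : ∑ j ∈ Bᶜ, v j = 0 := by linarith
    have h3 : v j1 ≤ ∑ j ∈ Bᶜ, v j :=
      Finset.single_le_sum (fun j _ => (hv j).le) (Finset.mem_compl.mpr hj1)
    linarith [hv j1]
  have hSC : S = suppSet yC := by
    apply Set.Subset.antisymm (fun p hp => (hS hp).1)
    intro p hp
    exact hBwc p.2 (hBuniv p.2) p.1 hp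
  refine ⟨hSC, Set.Subset.antisymm ?_ ?_⟩
  · intro p hp
    rw [← hSC] at hp
    exact (hS hp).2
  · intro p hp
    rw [← hSC]
    exact hAwc p.1 (hAuniv p.1) p.2 hp
end

section
/- Let y and y' be two points of the transportation polytope TP(u,v) and let (i₁, j₁) be a pair with y'_{i₁ j₁} > y_{i₁ j₁}. Then there exist an integer k ≥ 2, distinct supply nodes i₁, …, i_k and distinct demand nodes j₁, …, j_k forming a cycle i₁ j₁ i₂ j₂ ⋯ i_k j_k i₁ in the complete bipartite graph, such that y'_{i_t j_t} > y_{i_t j_t} for all t = 1, …, k and y'_{i_{t+1} j_t} < y_{i_{t+1} j_t} for all t = 1, …, k (indices taken modulo k, so i_{k+1} = i₁). That is, the difference y' − y admits through any edge where it is positive an alternating cycle of edges on which y' − y is alternately positive and negative. -/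
open scoped BigOperators

namespace DAC

variable {N1 N2 : ℕ}

/-- The step relation of the alternating digraph. -/
def Stp (z : Fin N1 → Fin N2 → ℝ) : (Fin N1 ⊕ Fin N2) → (Fin N1 ⊕ Fin N2) → Prop
  | Sum.inl i, Sum.inr j => 0 < z i j
  | Sum.inr j, Sum.inl i => z i j < 0
  | _, _ => False

@[simp] lemma stp_lr (z : Fin N1 → Fin N2 → ℝ) (i : Fin N1) (j : Fin N2) :
    Stp z (Sum.inl i) (Sum.inr j) ↔ 0 < z i j := Iff.rfl

@[simp] lemma stp_rl (z : Fin N1 → Fin N2 → ℝ) (i : Fin N1) (j : Fin N2) :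
    Stp z (Sum.inr j) (Sum.inl i) ↔ z i j < 0 := Iff.rfl

@[simp] lemma stp_ll (z : Fin N1 → Fin N2 → ℝ) (i i' : Fin N1) :
    ¬ Stp z (Sum.inl i) (Sum.inl i') := fun h => h

@[simp] lemma stp_rr (z : Fin N1 → Fin N2 → ℝ) (j j' : Fin N2) :
    ¬ Stp z (Sum.inr j) (Sum.inr j') := fun h => h

lemma stp_cases {z : Fin N1 → Fin N2 → ℝ} {x y : Fin N1 ⊕ Fin N2} (h : Stp z x y) :
    (∃ i j, x = Sum.inl i ∧ y = Sum.inr j ∧ 0 < z i j) ∨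
    (∃ i j, x = Sum.inr j ∧ y = Sum.inl i ∧ z i j < 0) := by
  rcases x with i | j <;> rcases y with i' | j'
  · exact absurd h (stp_ll z i i')
  · exact Or.inl ⟨i, j', rfl, rfl, h⟩
  · exact Or.inr ⟨i', j, rfl, rfl, h⟩
  · exact absurd h (stp_rr z j j')

/-- Reachability from `j1` along the alternating digraph. -/
def Reach (z : Fin N1 → Fin N2 → ℝ) (j1 : Fin N2) (x : Fin N1 ⊕ Fin N2) : Prop :=
  ∃ n : ℕ, ∃ f : ℕ → Fin N1 ⊕ Fin N2,
    f 0 = Sum.inr j1 ∧ f n = x ∧ ∀ m < n, Stp z (f m) (f (m + 1))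

lemma reach_refl (z : Fin N1 → Fin N2 → ℝ) (j1 : Fin N2) : Reach z j1 (Sum.inr j1) :=
  ⟨0, fun _ => Sum.inr j1, rfl, rfl, by omega⟩

lemma reach_step {z : Fin N1 → Fin N2 → ℝ} {j1 : Fin N2} {x y : Fin N1 ⊕ Fin N2}
    (hx : Reach z j1 x) (hxy : Stp z x y) : Reach z j1 y := by
  obtain ⟨n, f, h0, hn, hc⟩ := hx
  refine ⟨n + 1, fun m => if m = n + 1 then y else f m, ?_, ?_, ?_⟩
  · simp [h0]
  · simp
  · intro m hm
    rcases Nat.lt_or_ge m n with hmn | hmn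
    · have h1 : m ≠ n + 1 := by omega
      have h2 : m + 1 ≠ n + 1 := by omega
      simpa [h1, h2, show m ≠ n by omega] using hc m hmn
    · have hmeq : m = n := by omega
      subst hmeq
      have h1 : m ≠ m + 1 := by omega
      simpa [h1, hn] using hxy

lemma reach_i1 {z : Fin N1 → Fin N2 → ℝ}
    (hrow : ∀ i, ∑ j, z i j = 0) (hcol : ∀ j, ∑ i, z i j = 0)
    {i1 : Fin N1} {j1 : Fin N2} (hpos : 0 < z i1 j1) :
    Reach z j1 (Sum.inl i1) := by
  classical
  by_contra hnr
  set A : Finset (Fin N1) := Finset.univ.filter (fun i => Reach z j1 (Sum.inl i)) with hA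
  set B : Finset (Fin N2) := Finset.univ.filter (fun j => Reach z j1 (Sum.inr j)) with hB
  have hBj1 : j1 ∈ B := by simp [hB, reach_refl]
  have hi1A : i1 ∉ A := by simp [hA, hnr]
  have hAB : ∀ i ∈ A, ∀ j, 0 < z i j → j ∈ B := by
    intro i hi j hz
    have hr : Reach z j1 (Sum.inl i) := by simpa [hA] using hi
    have : Reach z j1 (Sum.inr j) := reach_step hr ((stp_lr z i j).2 hz)
    simp [hB, this]
  have hBA : ∀ j ∈ B, ∀ i, z i j < 0 → i ∈ A := by
    intro j hj i hz
    have hr : Reach z j1 (Sum.inr j) := by simpa [hB] using hj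
    have : Reach z j1 (Sum.inl i) := reach_step hr ((stp_rl z i j).2 hz)
    simp [hA, this]
  -- row estimate
  have h1 : ∀ i ∈ A, 0 ≤ ∑ j ∈ B, z i j := by
    intro i hi
    have hsplit : ∑ j ∈ B, z i j + ∑ j ∈ Bᶜ, z i j = 0 := by
      rw [Finset.sum_add_sum_compl]; exact hrow i
    have hle : ∑ j ∈ Bᶜ, z i j ≤ 0 := by
      refine Finset.sum_nonpos fun j hj => ?_
      by_contra hzz
      push_neg at hzz
      exact (Finset.mem_compl.1 hj) (hAB i hi j hzz)
    linarith
  -- column estimates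
  have h2 : ∀ j ∈ B, ∑ i ∈ A, z i j ≤ 0 := by
    intro j hj
    have hsplit : ∑ i ∈ A, z i j + ∑ i ∈ Aᶜ, z i j = 0 := by
      rw [Finset.sum_add_sum_compl]; exact hcol j
    have hle : 0 ≤ ∑ i ∈ Aᶜ, z i j := by
      refine Finset.sum_nonneg fun i hi => ?_
      by_contra hzz
      push_neg at hzz
      exact (Finset.mem_compl.1 hi) (hBA j hj i hzz)
    linarith
  have h3 : ∑ i ∈ A, z i j1 ≤ -z i1 j1 := by
    have hsplit : ∑ i ∈ A, z i j1 + ∑ i ∈ Aᶜ, z i j1 = 0 := by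
      rw [Finset.sum_add_sum_compl]; exact hcol j1
    have hnonneg : ∀ i ∈ Aᶜ, 0 ≤ z i j1 := by
      intro i hi
      by_contra hzz
      push_neg at hzz
      exact (Finset.mem_compl.1 hi) (hBA j1 hBj1 i hzz)
    have hsingle : z i1 j1 ≤ ∑ i ∈ Aᶜ, z i j1 :=
      Finset.single_le_sum hnonneg (Finset.mem_compl.2 hi1A)
    linarith
  have hS1 : (0:ℝ) ≤ ∑ i ∈ A, ∑ j ∈ B, z i j :=
    Finset.sum_nonneg h1
  have hS2 : ∑ i ∈ A, ∑ j ∈ B, z i j < 0 := by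
    rw [Finset.sum_comm]
    rw [← Finset.add_sum_erase B _ hBj1]
    have hrest : ∑ j ∈ B.erase j1, ∑ i ∈ A, z i j ≤ 0 :=
      Finset.sum_nonpos fun j hj => h2 j (Finset.mem_of_mem_erase hj)
    have : ∑ i ∈ A, z i j1 < 0 := by linarith
    linarith
  linarith

/-- Key combinatorial lemma: an alternating cycle through a positive entry. -/
lemma key {z : Fin N1 → Fin N2 → ℝ}
    (hrow : ∀ i, ∑ j, z i j = 0) (hcol : ∀ j, ∑ i, z i j = 0)
    (i1 : Fin N1) (j1 : Fin N2) (hpos : 0 < z i1 j1) :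
    ∃ k : ℕ, 2 ≤ k ∧ ∃ (σ : ZMod k → Fin N1) (δ : ZMod k → Fin N2),
      Function.Injective σ ∧ Function.Injective δ ∧
      σ 0 = i1 ∧ δ 0 = j1 ∧
      (∀ t : ZMod k, 0 < z (σ t) (δ t)) ∧
      (∀ t : ZMod k, z (σ (t + 1)) (δ t) < 0) := by
  classical
  have hex : ∃ n : ℕ, ∃ f : ℕ → Fin N1 ⊕ Fin N2,
      f 0 = Sum.inr j1 ∧ f n = Sum.inl i1 ∧ ∀ m < n, Stp z (f m) (f (m + 1)) :=
    reach_i1 hrow hcol hpos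
  have hspec := Nat.find_spec hex
  have hminN : ∀ m, m < Nat.find hex → ¬ ∃ f : ℕ → Fin N1 ⊕ Fin N2,
      f 0 = Sum.inr j1 ∧ f m = Sum.inl i1 ∧ ∀ p < m, Stp z (f p) (f (p + 1)) :=
    fun m hm => Nat.find_min hex hm
  obtain ⟨n, hn⟩ : ∃ n, n = Nat.find hex := ⟨_, rfl⟩
  rw [← hn] at hspec hminN
  obtain ⟨f, hf0, hfn, hchain⟩ := hspec
  have hmin := hminN
  -- injectivity of f on [0, n]
  have hinj : ∀ p q, p ≤ n → q ≤ n → f p = f q → p = q := by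
    have haux : ∀ p q, p < q → q ≤ n → f p ≠ f q := by
      intro p q hpq hq hfe
      set d := q - p with hd
      have hdpos : 0 < d := by omega
      refine hmin (n - d) (by omega) ⟨fun m => if m < p then f m else f (m + d), ?_, ?_, ?_⟩
      · show (if 0 < p then f 0 else f (0 + d)) = Sum.inr j1
        rcases Nat.eq_zero_or_pos p with hp0 | hp0
        · rw [if_neg (by omega), show (0 : ℕ) + d = q by omega, ← hfe, hp0]
          exact hf0
        · rw [if_pos hp0]; exact hf0
      · show (if n - d < p then f (n - d) else f (n - d + d)) = Sum.inl i1
        rw [if_neg (by omega), show n - d + d = n by omega]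
        exact hfn
      · intro m hm
        show Stp z (if m < p then f m else f (m + d))
          (if m + 1 < p then f (m + 1) else f (m + 1 + d))
        rcases Nat.lt_trichotomy (m + 1) p with h1 | h1 | h1
        · rw [if_pos (by omega : m < p), if_pos h1]
          exact hchain m (by omega)
        · rw [if_pos (by omega : m < p), if_neg (by omega : ¬ m + 1 < p),
            show m + 1 + d = q by omega, ← hfe, ← h1]
          exact hchain m (by omega)
        · rw [if_neg (by omega : ¬ m < p), if_neg (by omega : ¬ m + 1 < p)]
          have hst : Stp z (f (m + d)) (f (m + d + 1)) := hchain (m + d) (by omega)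
          rw [show m + 1 + d = m + d + 1 by omega]
          exact hst
    intro p q hp hq hfe
    rcases Nat.lt_trichotomy p q with h | h | h
    · exact absurd hfe (haux p q h hq)
    · exact h
    · exact absurd hfe.symm (haux q p h hp)
  -- parity of positions
  have hpar : ∀ m, m ≤ n → (Even m → ∃ j, f m = Sum.inr j) ∧ (¬ Even m → ∃ i, f m = Sum.inl i) := by
    intro m
    induction m with
    | zero => exact fun _ => ⟨fun _ => ⟨j1, hf0⟩, fun h => absurd (Even.zero) h⟩
    | succ m ih =>
      intro hm
      have hstep := hchain m (by omega)
      have ihm := ih (by omega)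
      rcases stp_cases hstep with ⟨i, j, hx, hy, _⟩ | ⟨i, j, hx, hy, _⟩
      · -- f m = inl i : m is odd, m+1 even
        have hodd : ¬ Even m := by
          intro hev
          obtain ⟨j', hj'⟩ := ihm.1 hev
          rw [hx] at hj'; exact absurd hj' (by simp)
        constructor
        · exact fun _ => ⟨j, hy⟩
        · intro hne
          exact absurd (by simpa [Nat.even_add_one] using hodd : Even (m+1)) hne
      · -- f m = inr j : m is even, m+1 odd
        have hev : Even m := by
          by_contra hne
          obtain ⟨i', hi'⟩ := ihm.2 hne
          rw [hx] at hi'; exact absurd hi' (by simp)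
        constructor
        · intro hev1
          exact absurd hev1 (by simpa [Nat.even_add_one] using hev)
        · exact fun _ => ⟨i, hy⟩
  have hnodd : ¬ Even n := by
    intro hev
    obtain ⟨j, hj⟩ := (hpar n le_rfl).1 hev
    rw [hfn] at hj
    exact absurd hj (by simp)
  have hn1 : n ≠ 1 := by
    intro h1
    have hst := hchain 0 (by omega)
    have hfn1 : f (0 + 1) = Sum.inl i1 := by rw [show (0:ℕ)+1 = 1 from rfl, ← h1]; exact hfn
    rw [hf0, hfn1] at hst
    have := (stp_rl z i1 j1).1 hst
    linarith
  have hn3 : 3 ≤ n := by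
    rcases Nat.lt_or_ge n 3 with h | h
    · interval_cases n
      · rw [hf0] at hfn; exact absurd hfn (by simp)
      · exact absurd rfl hn1
      · exact absurd (by norm_num : Even 2) hnodd
    · exact h
  obtain ⟨m0, hm0⟩ : ∃ m0, n = 2 * m0 + 3 := by
    rcases Nat.even_or_odd n with he | ho
    · exact absurd he hnodd
    · obtain ⟨c, hc⟩ := ho
      exact ⟨c - 1, by omega⟩
  set k : ℕ := m0 + 2 with hk
  have hnk : n = 2 * k - 1 := by omega
  -- extraction functions
  set el : (Fin N1 ⊕ Fin N2) → Fin N1 := Sum.elim id (fun _ => i1) with hel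
  set er : (Fin N1 ⊕ Fin N2) → Fin N2 := Sum.elim (fun _ => j1) id with her
  set posσ : Fin k → ℕ := fun t => if (t : ℕ) = 0 then n else 2 * (t : ℕ) - 1 with hposσ
  set σf : Fin k → Fin N1 := fun t => el (f (posσ t)) with hσf
  set δf : Fin k → Fin N2 := fun t => er (f (2 * (t : ℕ))) with hδf
  have hposσ_le : ∀ t : Fin k, posσ t ≤ n := by
    intro t
    have := t.isLt
    simp only [hposσ]
    split <;> omega
  have hposσ_odd : ∀ t : Fin k, ¬ Even (posσ t) := by
    intro t
    simp only [hposσ]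
    split
    · exact hnodd
    · rename_i ht0
      rintro ⟨c, hc⟩
      omega
  have hfσ : ∀ t : Fin k, f (posσ t) = Sum.inl (σf t) := by
    intro t
    obtain ⟨i, hi⟩ := (hpar (posσ t) (hposσ_le t)).2 (hposσ_odd t)
    rw [hσf]; simp only; rw [hi, hel]; simp
  have hδ_le : ∀ t : Fin k, 2 * (t : ℕ) ≤ n := by
    intro t; have := t.isLt; omega
  have hfδ : ∀ t : Fin k, f (2 * (t : ℕ)) = Sum.inr (δf t) := by
    intro t
    obtain ⟨j, hj⟩ := (hpar (2 * (t:ℕ)) (hδ_le t)).1 ⟨(t:ℕ), by omega⟩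
    rw [hδf]; simp only; rw [hj, her]; simp
  -- injectivity
  have hσinj : Function.Injective σf := by
    intro s t hst
    have he : f (posσ s) = f (posσ t) := by rw [hfσ s, hfσ t, hst]
    have := hinj _ _ (hposσ_le s) (hposσ_le t) he
    have hs := s.isLt
    have ht := t.isLt
    apply Fin.ext
    simp only [hposσ] at this
    split at this <;> split at this <;> omega
  have hδinj : Function.Injective δf := by
    intro s t hst
    have he : f (2 * (s:ℕ)) = f (2 * (t:ℕ)) := by rw [hfδ s, hfδ t, hst]
    have := hinj _ _ (hδ_le s) (hδ_le t) he
    apply Fin.ext; omega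
  -- base point
  have hσ0 : σf 0 = i1 := by
    have h0 : posσ (0 : Fin k) = n := by simp [hposσ]
    have := hfσ (0 : Fin k)
    rw [h0, hfn] at this
    exact Sum.inl.inj this.symm
  have hδ0 : δf 0 = j1 := by
    have := hfδ (0 : Fin k)
    simp only [Fin.val_zero, Nat.mul_zero] at this
    rw [hf0] at this
    exact (Sum.inr.inj this).symm
  -- positive edges
  have hposedge : ∀ t : Fin k, 0 < z (σf t) (δf t) := by
    intro t
    rcases Nat.eq_zero_or_pos (t : ℕ) with ht0 | ht0
    · have ht : t = 0 := Fin.ext ht0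
      rw [ht, hσ0, hδ0]; exact hpos
    · have hps : posσ t = 2 * (t:ℕ) - 1 := by
        simp only [hposσ]; rw [if_neg (by omega)]
      have hlt : 2 * (t:ℕ) - 1 < n := by have := t.isLt; omega
      have hstep := hchain (2 * (t:ℕ) - 1) hlt
      rw [show 2 * (t:ℕ) - 1 + 1 = 2 * (t:ℕ) by omega] at hstep
      rw [← hps, hfσ t, hfδ t] at hstep
      exact (stp_lr z _ _).1 hstep
  -- negative edges
  have hval_add_one : ∀ t : Fin k, ((t + 1 : Fin k) : ℕ) = ((t:ℕ) + 1) % k := by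
    intro t
    rw [Fin.add_def]
    congr 1
  have hposσ_succ : ∀ t : Fin k, posσ (t + 1) = 2 * (t:ℕ) + 1 := by
    intro t
    have ht := t.isLt
    have hv := hval_add_one t
    simp only [hposσ]
    rcases Nat.lt_or_ge ((t:ℕ) + 1) k with hlt | hge
    · have : ((t + 1 : Fin k) : ℕ) = (t:ℕ) + 1 := by rw [hv]; exact Nat.mod_eq_of_lt hlt
      rw [this]
      split <;> omega
    · have hteq : (t:ℕ) = k - 1 := by omega
      have h0 : ((t + 1 : Fin k) : ℕ) = 0 := by
        rw [hv]
        have h2 : (t:ℕ) + 1 = k := by omega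
        rw [h2, Nat.mod_self]
      rw [h0]
      rw [if_pos rfl]
      omega
  have hnegedge : ∀ t : Fin k, z (σf (t + 1)) (δf t) < 0 := by
    intro t
    have hlt : 2 * (t:ℕ) < n := by have := t.isLt; omega
    have hstep := hchain (2 * (t:ℕ)) hlt
    have h1 : f (2 * (t:ℕ) + 1) = Sum.inl (σf (t + 1)) := by
      rw [← hposσ_succ t]; exact hfσ (t + 1)
    rw [hfδ t, h1] at hstep
    exact (stp_rl z _ _).1 hstep
  exact ⟨k, by omega, σf, δf, hσinj, hδinj, hσ0, hδ0, hposedge, hnegedge⟩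

end DAC

theorem difference_alternating_cycle (N1 N2 : ℕ) (hN1 : 0 < N1) (hN2 : 0 < N2)
    (u : Fin N1 → ℝ) (v : Fin N2 → ℝ)
    (hu : ∀ i, 0 < u i) (hv : ∀ j, 0 < v j)
    (huv : ∑ i, u i = ∑ j, v j)
    (y y' : Matrix (Fin N1) (Fin N2) ℝ)
    (hy : y ∈ TP N1 N2 u v) (hy' : y' ∈ TP N1 N2 u v)
    (i1 : Fin N1) (j1 : Fin N2) (h : y i1 j1 < y' i1 j1) :
    ∃ k : ℕ, 2 ≤ k ∧ ∃ (σ : ZMod k → Fin N1) (δ : ZMod k → Fin N2),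
      Function.Injective σ ∧ Function.Injective δ ∧
      σ 0 = i1 ∧ δ 0 = j1 ∧
      (∀ t : ZMod k, y (σ t) (δ t) < y' (σ t) (δ t)) ∧
      (∀ t : ZMod k, y' (σ (t + 1)) (δ t) < y (σ (t + 1)) (δ t)) := by
  obtain ⟨hy0, hyr, hyc⟩ := hy
  obtain ⟨hy'0, hy'r, hy'c⟩ := hy'
  set z : Fin N1 → Fin N2 → ℝ := fun i j => y' i j - y i j with hz
  have hrow : ∀ i, ∑ j, z i j = 0 := by
    intro i
    simp only [hz, Finset.sum_sub_distrib, hyr i, hy'r i, sub_self]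
  have hcol : ∀ j, ∑ i, z i j = 0 := by
    intro j
    simp only [hz, Finset.sum_sub_distrib, hyc j, hy'c j, sub_self]
  have hpos : 0 < z i1 j1 := by simp [hz]; linarith
  obtain ⟨k, hk, σ, δ, hσinj, hδinj, hσ0, hδ0, hpe, hne⟩ := DAC.key hrow hcol i1 j1 hpos
  refine ⟨k, hk, σ, δ, hσinj, hδinj, hσ0, hδ0, ?_, ?_⟩
  · intro t
    have := hpe t
    simp only [hz] at this
    linarith
  · intro t
    have := hne t
    simp only [hz] at this
    linarith
end
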